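/- arXiv:2004.02500 — 5 statements merged into one kernel-verified Lean document; each statement's English description precedes it below -/
import Mathlib

section
/- There is a constant C (depending only on F) such that for all positive integers a and b, ϑ(ab) ≤ C·ϑ(a)ϑ(b), where ϑ(n) counts roots of the fixed cubic F modulo n. -/
/-- The number of roots of `F(x) = x³ + Ax + B` modulo `n`. -/
noncomputable def theta (A B : ℤ) (n : ℕ) : ℕ :=
  Nat.card {ρ : ZMod n // ρ ^ 3 + (A : ZMod n) * ρ + (B : ZMod n) = 0}

section Aux
variable (A B : ℤ)

lemma bezout (x : ℤ) :
    (27*B - 18*A*x)*(x^3+A*x+B) + (6*A*x^2-9*B*x+4*A^2)*(3*x^2+A) = 4*A^3+27*B^2 := by ring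

lemma theta_one : theta A B 1 = 1 := by
  have : Unique {ρ : ZMod 1 // ρ ^ 3 + (A : ZMod 1) * ρ + (B : ZMod 1) = 0} :=
    ⟨⟨⟨0, Subsingleton.elim _ _⟩⟩, fun a => Subtype.ext (Subsingleton.elim _ _)⟩
  exact Nat.card_unique

lemma theta_le (n : ℕ) (hn : n ≠ 0) : theta A B n ≤ n := by
  haveI : NeZero n := ⟨hn⟩
  calc theta A B n ≤ Nat.card (ZMod n) := Nat.card_le_card_of_injective _ Subtype.val_injective
    _ = n := Nat.card_zmod n

lemma root_iff {n : ℕ} [NeZero n] (σ : ZMod n) :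
    σ ^ 3 + (A : ZMod n) * σ + (B : ZMod n) = 0 ↔
      (n : ℤ) ∣ ((σ.val : ℤ)^3 + A * (σ.val : ℤ) + B) := by
  rw [← ZMod.intCast_zmod_eq_zero_iff_dvd]
  have hσ : (((σ.val : ℕ) : ZMod n)) = σ := by
    rw [ZMod.natCast_val, ZMod.cast_id]
  constructor
  · intro h; push_cast; rw [hσ]; exact h
  · intro h; have := h; push_cast at this; rwa [hσ] at this

lemma root_map {m n : ℕ} (h : m ∣ n) (σ : ZMod n)
    (hσ : σ ^ 3 + (A : ZMod n) * σ + (B : ZMod n) = 0) :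
    (ZMod.castHom h (ZMod m)) σ ^ 3 + (A : ZMod m) * (ZMod.castHom h (ZMod m)) σ
      + (B : ZMod m) = 0 := by
  have := congrArg (ZMod.castHom h (ZMod m)) hσ
  simpa [map_add, map_mul, map_pow, map_intCast] using this

lemma theta_zero_down {m n : ℕ} (h : m ∣ n) (hm : m ≠ 0) (hn : n ≠ 0)
    (h0 : theta A B m = 0) : theta A B n = 0 := by
  haveI : NeZero m := ⟨hm⟩
  haveI : NeZero n := ⟨hn⟩
  by_contra hne
  rw [theta] at hne
  obtain ⟨⟨σ, hσ⟩⟩ := (Nat.card_ne_zero.mp hne).1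
  have : theta A B m ≠ 0 := by
    rw [theta, Nat.card_ne_zero]
    exact ⟨⟨⟨_, root_map A B h σ hσ⟩⟩, inferInstance⟩
  exact this h0

lemma theta_mul_coprime {m n : ℕ} (h : Nat.Coprime m n) :
    theta A B (m * n) = theta A B m * theta A B n := by
  have e := ZMod.chineseRemainder h
  rw [theta, theta, theta, ← Nat.card_prod]
  apply Nat.card_congr
  refine (Equiv.subtypeEquiv e.toEquiv ?_).trans Equiv.subtypeProdEquivProd
  intro σ
  have : e (σ ^ 3 + (A : ZMod (m*n)) * σ + B) =
      (e σ ^ 3 + (A : ZMod m × ZMod n) * e σ + B) := by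
    simp [map_add, map_mul, map_pow, map_intCast]
  constructor
  · intro hσ
    rw [hσ, map_zero] at this
    have h1 := congrArg Prod.fst this.symm
    have h2 := congrArg Prod.snd this.symm
    exact ⟨h1, h2⟩
  · rintro ⟨h1, h2⟩
    have : e (σ ^ 3 + (A : ZMod (m*n)) * σ + B) = 0 := by
      rw [this]; exact Prod.ext h1 h2
    simpa using (map_eq_zero_iff e e.injective).mp this

lemma no_double {p d : ℕ} {x : ℤ} (hR : ¬ ((p:ℤ)^(d+1) ∣ 4*A^3+27*B^2))
    (h1 : (p:ℤ)^(d+1) ∣ x^3+A*x+B) (h2 : (p:ℤ)^(d+1) ∣ 3*x^2+A) : False := by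
  apply hR
  rw [← bezout A B x]
  exact dvd_add (h1.mul_left _) (h2.mul_left _)

lemma sep_step {p d k j : ℕ} (hp : p.Prime) (hR : ¬ ((p:ℤ)^(d+1) ∣ 4*A^3+27*B^2))
    {x y : ℤ} (hx : (p:ℤ)^k ∣ x^3+A*x+B) (hy : (p:ℤ)^k ∣ y^3+A*y+B)
    (hj1 : d+1 ≤ j) (hj2 : j + d + 1 ≤ k) (hdvd : (p:ℤ)^j ∣ x - y) :
    (p:ℤ)^(j+1) ∣ x - y := by
  obtain ⟨c, hc⟩ := hdvd
  have hpz : Prime (p : ℤ) := Nat.prime_iff_prime_int.mp hp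
  have hppos : (0:ℤ) < (p:ℤ)^j := pow_pos (by exact_mod_cast hp.pos) j
  -- F x - F y = (x-y) * ((3y²+A) + (x-y)(x+2y))
  have hfact : x^3+A*x+B - (y^3+A*y+B) = (x-y) * ((3*y^2+A) + (x-y)*(x+2*y)) := by ring
  have hdk : (p:ℤ)^k ∣ (x-y) * ((3*y^2+A) + (x-y)*(x+2*y)) := by
    rw [← hfact]; exact dvd_sub hx hy
  set S : ℤ := (3*y^2+A) + (x-y)*(x+2*y) with hS
  -- cancel p^j
  have hcan : (p:ℤ)^(k-j) ∣ c * S := by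
    obtain ⟨t, ht⟩ := hdk
    rw [hc] at ht
    have hkj : k = j + (k - j) := by omega
    rw [hkj, pow_add, mul_assoc, mul_assoc] at ht
    have := mul_left_cancel₀ (ne_of_gt hppos) ht
    exact ⟨t, this⟩
  have hd1 : (p:ℤ)^(d+1) ∣ c * S := dvd_trans (pow_dvd_pow _ (by omega)) hcan
  -- show p ∣ c
  have hpc : (p:ℤ) ∣ c := by
    by_contra hpc
    have hcop : IsCoprime ((p:ℤ)^(d+1)) c :=
      ((hpz.coprime_iff_not_dvd).mpr hpc).pow_left
    have hdS : (p:ℤ)^(d+1) ∣ S := hcop.dvd_of_dvd_mul_left hd1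
    have hdF' : (p:ℤ)^(d+1) ∣ 3*y^2+A := by
      have h2 : (p:ℤ)^(d+1) ∣ (x-y)*(x+2*y) := by
        rw [hc]
        exact (dvd_trans (pow_dvd_pow _ hj1) (dvd_mul_right _ _)).mul_right _
      have := dvd_sub hdS h2
      simpa [hS] using this
    have hdF : (p:ℤ)^(d+1) ∣ y^3+A*y+B := dvd_trans (pow_dvd_pow _ (by omega)) hy
    exact no_double A B hR hdF hdF'
  obtain ⟨c', hc'⟩ := hpc
  exact ⟨c', by rw [hc, hc', pow_succ]; ring⟩

lemma sep {p d k : ℕ} (hp : p.Prime) (hR : ¬ ((p:ℤ)^(d+1) ∣ 4*A^3+27*B^2))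
    {x y : ℤ} (hx : (p:ℤ)^k ∣ x^3+A*x+B) (hy : (p:ℤ)^k ∣ y^3+A*y+B)
    (h0 : (p:ℤ)^(d+1) ∣ x - y) : (p:ℤ)^(k-d) ∣ x - y := by
  by_cases hkd : k - d ≤ d + 1
  · exact dvd_trans (pow_dvd_pow _ hkd) h0
  push_neg at hkd
  have claim : ∀ j, d+1 ≤ j → j ≤ k - d → (p:ℤ)^j ∣ x - y := by
    intro j hj
    induction j, hj using Nat.le_induction with
    | base => intro _; exact h0
    | succ j hj ih =>
      intro hjk
      exact sep_step A B hp hR hx hy hj (by omega) (ih (by omega))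
  exact claim _ (by omega) le_rfl

lemma modeq_of_sep {p d k : ℕ} (hp : p.Prime) (hR : ¬ ((p:ℤ)^(d+1) ∣ 4*A^3+27*B^2))
    {σ τ : ZMod (p^k)} [NeZero (p^k)]
    (hσ : σ ^ 3 + (A : ZMod (p^k)) * σ + (B : ZMod (p^k)) = 0)
    (hτ : τ ^ 3 + (A : ZMod (p^k)) * τ + (B : ZMod (p^k)) = 0)
    (h : σ.val ≡ τ.val [MOD p^(d+1)]) : σ.val ≡ τ.val [MOD p^(k-d)] := by
  have hx := (root_iff A B σ).mp hσ
  have hy := (root_iff A B τ).mp hτ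
  push_cast at hx hy
  have h' : ((p:ℤ))^(d+1) ∣ (τ.val : ℤ) - (σ.val : ℤ) := by
    have := Nat.modEq_iff_dvd.mp h
    push_cast at this ⊢
    exact this
  have := sep A B hp hR hy hx h'
  rw [Nat.modEq_iff_dvd]
  push_cast at this ⊢
  exact this

lemma theta_pow_le_bad {p d : ℕ} (hp : p.Prime) (hR : ¬ ((p:ℤ)^(d+1) ∣ 4*A^3+27*B^2))
    (k : ℕ) : theta A B (p^k) ≤ p^(2*d+1) := by
  by_cases hk : k ≤ 2*d+1
  · exact le_trans (theta_le A B _ (pow_ne_zero k hp.pos.ne')) (Nat.pow_le_pow_right hp.pos hk)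
  push_neg at hk
  haveI : NeZero (p^k) := ⟨pow_ne_zero k hp.pos.ne'⟩
  have hd1pos : 0 < p^(d+1) := pow_pos hp.pos _
  have hkdpos : 0 < p^(k-d) := pow_pos hp.pos _
  have hval : ∀ σ : ZMod (p^k), σ.val < p^d * p^(k-d) := by
    intro σ
    have h1 : σ.val < p^k := ZMod.val_lt σ
    have h2 : p^d * p^(k-d) = p^k := by rw [← pow_add]; congr 1; omega
    omega
  have key : ∀ (σ τ : {ρ : ZMod (p^k) // ρ ^ 3 + (A : ZMod (p^k)) * ρ + (B : ZMod (p^k)) = 0}),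
      (σ : ZMod (p^k)).val % p^(d+1) = (τ : ZMod (p^k)).val % p^(d+1) →
      (σ : ZMod (p^k)).val / p^(k-d) = (τ : ZMod (p^k)).val / p^(k-d) → σ = τ := by
    rintro ⟨σ, hσ⟩ ⟨τ, hτ⟩ h1 h2
    have hmod : σ.val ≡ τ.val [MOD p^(k-d)] := modeq_of_sep A B hp hR hσ hτ h1
    have : σ.val = τ.val := by
      have e1 := Nat.div_add_mod σ.val (p^(k-d))
      have e2 := Nat.div_add_mod τ.val (p^(k-d))
      have hm : σ.val % p^(k-d) = τ.val % p^(k-d) := hmod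
      rw [← e1, ← e2, h2, hm]
    exact Subtype.ext (ZMod.val_injective _ this)
  have hinj : Function.Injective
      (fun σ : {ρ : ZMod (p^k) // ρ ^ 3 + (A : ZMod (p^k)) * ρ + (B : ZMod (p^k)) = 0} =>
        ((⟨(σ : ZMod (p^k)).val % p^(d+1), Nat.mod_lt _ hd1pos⟩,
          ⟨(σ : ZMod (p^k)).val / p^(k-d), (Nat.div_lt_iff_lt_mul hkdpos).mpr (hval _)⟩) :
          Fin (p^(d+1)) × Fin (p^d))) := by
    intro σ τ h
    rw [Prod.ext_iff] at h
    exact key σ τ (by simpa using congrArg Fin.val h.1) (by simpa using congrArg Fin.val h.2)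
  calc theta A B (p^k) ≤ Nat.card (Fin (p^(d+1)) × Fin (p^d)) :=
        Nat.card_le_card_of_injective _ hinj
    _ = p^(2*d+1) := by
        rw [Nat.card_prod, Nat.card_eq_fintype_card, Nat.card_eq_fintype_card]
        simp [← pow_add]
        ring_nf

lemma theta_pow_le_good {p : ℕ} (hp : p.Prime) (hR : ¬ ((p:ℤ)^(0+1) ∣ 4*A^3+27*B^2))
    {α β : ℕ} (hα : 1 ≤ α) : theta A B (p^(α+β)) ≤ theta A B (p^α) := by
  haveI : NeZero (p^(α+β)) := ⟨pow_ne_zero _ hp.pos.ne'⟩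
  haveI : NeZero (p^α) := ⟨pow_ne_zero _ hp.pos.ne'⟩
  have hdvd : p^α ∣ p^(α+β) := pow_dvd_pow _ (by omega)
  apply Nat.card_le_card_of_injective
    (fun σ : {ρ : ZMod (p^(α+β)) // ρ ^ 3 + _ * ρ + _ = 0} =>
      (⟨ZMod.castHom hdvd (ZMod (p^α)) σ, root_map A B hdvd σ σ.2⟩ :
        {ρ : ZMod (p^α) // ρ ^ 3 + (A : ZMod (p^α)) * ρ + (B : ZMod (p^α)) = 0}))
  rintro ⟨σ, hσ⟩ ⟨τ, hτ⟩ h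
  simp only [Subtype.mk.injEq] at h ⊢
  -- castHom σ = (σ.val : ZMod (p^α))
  have hcast : ∀ ρ : ZMod (p^(α+β)), ZMod.castHom hdvd (ZMod (p^α)) ρ = ((ρ.val : ℕ) : ZMod (p^α)) := by
    intro ρ
    rw [ZMod.castHom_apply, ZMod.natCast_val]
  rw [hcast, hcast] at h
  have hmodeq : σ.val ≡ τ.val [MOD p^α] := (ZMod.natCast_eq_natCast_iff _ _ _).mp h
  have hmodeq1 : σ.val ≡ τ.val [MOD p^(0+1)] := hmodeq.of_dvd (pow_dvd_pow _ (by omega))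
  have hfin : σ.val ≡ τ.val [MOD p^(α+β-0)] := modeq_of_sep A B hp hR hσ hτ hmodeq1
  have : σ.val = τ.val := by
    have h1 : σ.val < p^(α+β) := ZMod.val_lt σ
    have h2 : τ.val < p^(α+β) := ZMod.val_lt τ
    simp only [Nat.sub_zero] at hfin
    exact Nat.ModEq.eq_of_lt_of_lt hfin h1 h2
  exact ZMod.val_injective _ this

lemma key {p : ℕ} (hp : p.Prime) (hN : 4*A^3+27*B^2 ≠ 0) (α β : ℕ) :
    theta A B (p^(α+β)) ≤
      p^(3 * ((4*A^3+27*B^2).natAbs.factorization p)) * (theta A B (p^α) * theta A B (p^β)) := by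
  set N := (4*A^3+27*B^2).natAbs with hNdef
  have hN' : N ≠ 0 := Int.natAbs_ne_zero.mpr hN
  set d := N.factorization p with hd
  have hR : ¬ ((p:ℤ)^(d+1) ∣ 4*A^3+27*B^2) := by
    intro hdvd
    have : (p:ℕ)^(d+1) ∣ N := by
      rw [hNdef]
      rw [← Int.natCast_dvd] at *
      · push_cast
        exact hdvd
    have := (Nat.Prime.pow_dvd_iff_le_factorization hp hN').mp this
    omega
  have hppos : 0 < p := hp.pos
  rcases Nat.eq_zero_or_pos α with hα | hα
  · subst hα
    simp only [Nat.zero_add, pow_zero, theta_one, one_mul]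
    exact Nat.le_mul_of_pos_left _ (pow_pos hppos _)
  rcases Nat.eq_zero_or_pos β with hβ | hβ
  · subst hβ
    simp only [Nat.add_zero, pow_zero, theta_one, mul_one]
    exact Nat.le_mul_of_pos_left _ (pow_pos hppos _)
  by_cases hzα : theta A B (p^α) = 0
  · rw [theta_zero_down A B (pow_dvd_pow p (by omega : α ≤ α+β))
      (pow_ne_zero _ hppos.ne') (pow_ne_zero _ hppos.ne') hzα]
    exact Nat.zero_le _
  by_cases hzβ : theta A B (p^β) = 0
  · rw [theta_zero_down A B (pow_dvd_pow p (by omega : β ≤ α+β))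
      (pow_ne_zero _ hppos.ne') (pow_ne_zero _ hppos.ne') hzβ]
    exact Nat.zero_le _
  have hα1 : 1 ≤ theta A B (p^α) := Nat.pos_of_ne_zero hzα
  have hβ1 : 1 ≤ theta A B (p^β) := Nat.pos_of_ne_zero hzβ
  by_cases hd0 : d = 0
  · rw [hd0]
    simp only [Nat.mul_zero, pow_zero, one_mul]
    calc theta A B (p^(α+β)) ≤ theta A B (p^α) := by
          apply theta_pow_le_good A B hp _ hα
          rw [← hd0]; exact hR
      _ ≤ theta A B (p^α) * theta A B (p^β) := Nat.le_mul_of_pos_right _ hβ1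
  · have hd1 : 1 ≤ d := Nat.pos_of_ne_zero hd0
    calc theta A B (p^(α+β)) ≤ p^(2*d+1) := theta_pow_le_bad A B hp hR _
      _ ≤ p^(3*d) := Nat.pow_le_pow_right hppos (by omega)
      _ ≤ p^(3*d) * (theta A B (p^α) * theta A B (p^β)) :=
          Nat.le_mul_of_pos_right _ (Nat.mul_pos hα1 hβ1)

end Aux

/-- There is a constant `C`, depending only on the cubic `F(x) = x³ + Ax + B` with nonzero
discriminant, such that `ϑ(ab) ≤ C·ϑ(a)·ϑ(b)` for all positive integers `a`, `b`. -/
theorem theta_submultiplicative (A B : ℤ) (hΔ : -(4 * A ^ 3 + 27 * B ^ 2) ≠ 0) :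
    ∃ C : ℕ, 0 < C ∧ ∀ a b : ℕ, 0 < a → 0 < b →
      theta A B (a * b) ≤ C * (theta A B a * theta A B b) := by
  have hN : 4*A^3+27*B^2 ≠ 0 := fun h => hΔ (by rw [h, neg_zero])
  set N := (4*A^3+27*B^2).natAbs with hNdef
  have hN' : N ≠ 0 := Int.natAbs_ne_zero.mpr hN
  refine ⟨N^3, by positivity, ?_⟩
  intro a b ha hb
  have ha' : a ≠ 0 := ha.ne'
  have hb' : b ≠ 0 := hb.ne'
  have hab' : a * b ≠ 0 := Nat.mul_ne_zero ha' hb'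
  have hfact : ∀ {n : ℕ}, n ≠ 0 →
      theta A B n = n.factorization.prod fun p k => theta A B (p ^ k) :=
    Nat.multiplicative_factorization (theta A B)
      (fun x y h => theta_mul_coprime A B h) (theta_one A B)
  set S := (a*b).primeFactors with hS
  set fa := a.factorization with hfa
  set fb := b.factorization with hfb
  -- expansions over S
  have expand : ∀ (n : ℕ), n ≠ 0 → n.primeFactors ⊆ S →
      theta A B n = ∏ p ∈ S, theta A B (p ^ (n.factorization p)) := by
    intro n hn hsub
    rw [hfact hn]
    refine Finsupp.prod_of_support_subset _ ?_ _ ?_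
    · rw [Nat.support_factorization]; exact hsub
    · intro p _; rw [pow_zero, theta_one]
  have hab : theta A B (a*b) = ∏ p ∈ S, theta A B (p ^ (fa p + fb p)) := by
    rw [expand (a*b) hab' (by rw [hS])]
    apply Finset.prod_congr rfl
    intro p _
    rw [Nat.factorization_mul ha' hb', Finsupp.add_apply]
  have haexp : theta A B a = ∏ p ∈ S, theta A B (p ^ (fa p)) :=
    expand a ha' (by rw [hS, Nat.primeFactors_mul ha' hb']; exact Finset.subset_union_left)
  have hbexp : theta A B b = ∏ p ∈ S, theta A B (p ^ (fb p)) :=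
    expand b hb' (by rw [hS, Nat.primeFactors_mul ha' hb']; exact Finset.subset_union_right)
  have hstep : theta A B (a*b) ≤
      ∏ p ∈ S, (p^(3 * (N.factorization p)) * (theta A B (p ^ (fa p)) * theta A B (p ^ (fb p)))) := by
    rw [hab]
    apply Finset.prod_le_prod (fun _ _ => Nat.zero_le _)
    intro p hp
    exact key A B (Nat.prime_of_mem_primeFactors hp) hN (fa p) (fb p)
  rw [Finset.prod_mul_distrib, Finset.prod_mul_distrib, ← haexp, ← hbexp] at hstep
  refine le_trans hstep (Nat.mul_le_mul_right _ ?_)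
  -- ∏ p^{3d} ≤ N^3
  have h1 : ∏ p ∈ S, p^(3 * (N.factorization p)) = (∏ p ∈ S, p^(N.factorization p))^3 := by
    rw [← Finset.prod_pow]
    apply Finset.prod_congr rfl
    intro p _
    rw [← pow_mul, mul_comm 3]
  rw [h1]
  have hdvd : (∏ p ∈ S, p^(N.factorization p)) ∣ N := by
    have heq : ∏ p ∈ S ∩ N.primeFactors, p^(N.factorization p)
        = ∏ p ∈ S, p^(N.factorization p) := by
      apply Finset.prod_subset Finset.inter_subset_left
      intro p hpS hpn
      have : p ∉ N.primeFactors := fun h => hpn (Finset.mem_inter.mpr ⟨hpS, h⟩)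
      rw [← Nat.support_factorization] at this
      rw [Finsupp.notMem_support_iff.mp this, pow_zero]
    have h2 : ∏ p ∈ N.primeFactors, p^(N.factorization p) = N := by
      conv_rhs => rw [← Nat.factorization_prod_pow_eq_self hN']
      rw [Finsupp.prod, Nat.support_factorization]
    have h3 := Finset.prod_dvd_prod_of_subset (S ∩ N.primeFactors) N.primeFactors
      (fun p => p ^ (N.factorization p)) Finset.inter_subset_right
    rw [heq, h2] at h3
    exact h3
  exact Nat.pow_le_pow_left (Nat.le_of_dvd (Nat.pos_of_ne_zero hN') hdvd) 3
end

section
/- For positive integers ℓ, q with gcd(ℓ, q) = 1, any δ > 0 and X ≥ 1, one has ∑_{n ≤ X, gcd(n,q)=1} φ(ℓn)/(ℓn) = (6/π²)·φ₁(ℓq)·X + O_δ(σ_{-δ}(q)·X^δ / φ₁(ℓq)), where φ is Euler's totient, φ₁(m) = ∏_{p|m}(1 + 1/p)^{-1}, and σ_{-δ}(q) = ∑_{d|q} d^{-δ}. -/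
open Finset Real

/-- `φ₁(m) = ∏_{p | m} (1 + 1/p)⁻¹`. -/
noncomputable def phi1 (m : ℕ) : ℝ :=
  ∏ p ∈ m.primeFactors, (1 + (p : ℝ)⁻¹)⁻¹

open ArithmeticFunction
open scoped ArithmeticFunction.Moebius ArithmeticFunction.zeta

lemma mu_abs_le (d : ℕ) : |(μ d : ℝ)| ≤ 1 := by
  have := ArithmeticFunction.abs_moebius_le_one (n := d)
  calc |(μ d : ℝ)| = ((|μ d| : ℤ) : ℝ) := by push_cast; rfl
  _ ≤ 1 := by exact_mod_cast this

lemma key_sum (L n : ℕ) (hL : L ≠ 0) (hn : n ≠ 0) (k : ℕ) :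
    ∑ d ∈ n.divisors, (if d.Coprime L then (μ d : ℝ) * ((d:ℝ)⁻¹)^k else 0)
      = ∏ p ∈ n.primeFactors \ L.primeFactors, (1 - ((p:ℝ)⁻¹)^k) := by
  rw [← Finset.sum_filter_of_ne (s := n.divisors)
      (f := fun d => if d.Coprime L then (μ d : ℝ) * ((d:ℝ)⁻¹)^k else 0)
      (p := fun d => Squarefree d) ?_]
  swap
  · intro x hx hne
    by_contra hsq
    simp [ArithmeticFunction.moebius_eq_zero_of_not_squarefree hsq] at hne
  rw [Nat.sum_divisors_filter_squarefree hn, Nat.factors_eq]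
  have htf : (n.primeFactorsList : Multiset ℕ).toFinset = n.primeFactors := Nat.toFinset_factors n
  rw [show ((n.primeFactorsList : Multiset ℕ).toFinset) = n.primeFactors from htf]
  have step : ∀ t ∈ n.primeFactors.powerset,
      (if (t.val.prod).Coprime L then (μ (t.val.prod) : ℝ) * (((t.val.prod : ℕ):ℝ))⁻¹^k else 0)
        = if t ∈ (n.primeFactors \ L.primeFactors).powerset then ∏ p ∈ t, (-(((p:ℝ))⁻¹^k)) else 0 := by
    intro t ht
    rw [Finset.mem_powerset] at ht
    have hprime : ∀ p ∈ t, Nat.Prime p := fun p hp => Nat.prime_of_mem_primeFactors (ht hp)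
    have hprod : t.val.prod = ∏ p ∈ t, p := by
      rw [Finset.prod_eq_multiset_prod]; simp
    have hcop : (t.val.prod).Coprime L ↔ t ∈ (n.primeFactors \ L.primeFactors).powerset := by
      rw [Finset.mem_powerset, hprod, Nat.coprime_prod_left_iff]
      constructor
      · intro h p hp
        refine Finset.mem_sdiff.mpr ⟨ht hp, fun hmem => ?_⟩
        have h2 := h p hp
        rw [Nat.Prime.coprime_iff_not_dvd (hprime p hp)] at h2
        exact h2 (Nat.dvd_of_mem_primeFactors hmem)
      · intro h p hp
        rw [Nat.Prime.coprime_iff_not_dvd (hprime p hp)]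
        intro hdvd
        exact (Finset.mem_sdiff.mp (h hp)).2 (Nat.mem_primeFactors.mpr ⟨hprime p hp, hdvd, hL⟩)
    by_cases hc : t ∈ (n.primeFactors \ L.primeFactors).powerset
    · rw [if_pos (hcop.mpr hc), if_pos hc, hprod,
        ArithmeticFunction.IsMultiplicative.map_prod_of_subset_primeFactors
          ArithmeticFunction.isMultiplicative_moebius n t ht]
      push_cast
      rw [← Finset.prod_inv_distrib, ← Finset.prod_pow, ← Finset.prod_mul_distrib]
      refine Finset.prod_congr rfl fun p hp => ?_
      rw [ArithmeticFunction.moebius_apply_prime (hprime p hp)]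
      push_cast
      ring
    · rw [if_neg (fun h => hc (hcop.mp h)), if_neg hc]
  rw [Finset.sum_congr rfl step, Finset.sum_ite_mem,
    Finset.inter_eq_right.mpr (Finset.powerset_mono.mpr Finset.sdiff_subset)]
  have := Finset.prod_add (fun p : ℕ => -(((p:ℝ))⁻¹^k)) (fun _ => (1:ℝ))
      (n.primeFactors \ L.primeFactors)
  simp only [Finset.prod_const_one, mul_one] at this
  rw [← this]
  exact Finset.prod_congr rfl fun p _ => by ring

lemma totient_ratio (m : ℕ) (hm : m ≠ 0) :
    (Nat.totient m : ℝ)/(m:ℝ) = ∏ p ∈ m.primeFactors, (1 - (p:ℝ)⁻¹) := by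
  have h := Nat.totient_eq_mul_prod_factors m
  have h2 : ((Nat.totient m : ℚ) : ℝ) = ((m : ℚ) * ∏ p ∈ m.primeFactors, (1 - (p : ℚ)⁻¹) : ℚ) := by
    exact_mod_cast congrArg (fun x : ℚ => (x : ℝ)) h
  push_cast at h2
  rw [h2, mul_comm, mul_div_assoc, div_self (by exact_mod_cast hm : (m:ℝ) ≠ 0), mul_one]

lemma moebius_sum (m : ℕ) : ∑ d ∈ m.divisors, (μ d : ℝ) = if m = 1 then 1 else 0 := by
  have h : ((μ * ↑ζ : ArithmeticFunction ℤ)) m = (1 : ArithmeticFunction ℤ) m := by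
    rw [ArithmeticFunction.moebius_mul_coe_zeta]
  rw [ArithmeticFunction.coe_mul_zeta_apply, ArithmeticFunction.one_apply] at h
  have h2 : ((∑ d ∈ m.divisors, μ d : ℤ) : ℝ) = ∑ d ∈ m.divisors, (μ d : ℝ) := by push_cast; rfl
  rw [← h2, h]
  split_ifs <;> simp

lemma coprime_indicator (q n : ℕ) (hq : q ≠ 0) (hn : n ≠ 0) :
    (if n.Coprime q then (1:ℝ) else 0) = ∑ e ∈ q.divisors, (if e ∣ n then (μ e:ℝ) else 0) := by
  have hset : q.divisors.filter (fun e => e ∣ n) = (n.gcd q).divisors := by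
    ext e
    simp only [Finset.mem_filter, Nat.mem_divisors, Nat.dvd_gcd_iff]
    constructor
    · rintro ⟨⟨h1, _⟩, h2⟩; exact ⟨⟨h2, h1⟩, Nat.gcd_ne_zero_right hq⟩
    · rintro ⟨⟨h1, h2⟩, _⟩; exact ⟨⟨h2, hq⟩, h1⟩
  rw [← Finset.sum_filter, hset, moebius_sum]

lemma count_eq (q d N : ℕ) (hq : q ≠ 0) (hdq : d.Coprime q) :
    (((Finset.Icc 1 N).filter (fun n => n.Coprime q)).filter (fun n => d ∣ n)).card
      = ∑ e ∈ q.divisors, (μ e : ℝ) * ((N / (d*e) : ℕ) : ℝ) := by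
  rw [Finset.filter_comm]
  set s₀ := (Finset.Icc 1 N).filter (fun n => d ∣ n) with hs₀
  rw [Finset.card_filter]
  push_cast
  rw [Finset.sum_congr rfl (fun n hn => coprime_indicator q n hq ?_)]
  swap
  · have := Finset.mem_Icc.mp (Finset.mem_filter.mp hn).1
    omega
  rw [Finset.sum_comm]
  refine Finset.sum_congr rfl fun e he => ?_
  have heq : s₀.filter (fun n => e ∣ n) = (Finset.Icc 1 N).filter (fun n => (d*e) ∣ n) := by
    rw [hs₀, Finset.filter_filter]
    refine Finset.filter_congr fun n hn => ?_
    have hde : d.Coprime e := Nat.Coprime.coprime_dvd_right (Nat.dvd_of_mem_divisors he) hdq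
    constructor
    · rintro ⟨h1, h2⟩; exact hde.mul_dvd_of_dvd_of_dvd h1 h2
    · intro h; exact ⟨(dvd_mul_right d e).trans h, (dvd_mul_left e d).trans h⟩
  rw [← Finset.sum_filter, heq]
  rw [Finset.sum_const, nsmul_eq_mul]
  have : Finset.Icc 1 N = Finset.Ioc 0 N := rfl
  rw [this, Nat.Ioc_filter_dvd_card_eq_div, mul_comm]

lemma summable_inv_sq : Summable (fun d : ℕ => ((d:ℝ)^2)⁻¹) := by
  have := (summable_one_div_nat_pow (p := 2)).mpr one_lt_two
  simpa [one_div] using this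

lemma tsum_sq_tail (c : ℕ) (hc : 1 ≤ c) :
    ∑' d : ℕ, (((d + c : ℕ):ℝ)^2)⁻¹ ≤ 2 / c := by
  have hsum : Summable (fun d : ℕ => (((d + c : ℕ):ℝ)^2)⁻¹) := by
    have := (summable_nat_add_iff (f := fun d : ℕ => ((d:ℝ)^2)⁻¹) c).mpr summable_inv_sq
    simpa using this
  refine Summable.tsum_le_of_sum_le hsum fun s => ?_
  obtain ⟨m, hm⟩ := s.exists_nat_subset_range
  calc ∑ k ∈ s, (((k + c:ℕ):ℝ)^2)⁻¹
      ≤ ∑ k ∈ Finset.range m, (((k + c:ℕ):ℝ)^2)⁻¹ :=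
        Finset.sum_le_sum_of_subset_of_nonneg hm (fun i _ _ => by positivity)
    _ = ∑ i ∈ Finset.Ico c (m + c), (((i:ℕ):ℝ)^2)⁻¹ := by
        rw [Finset.sum_Ico_eq_sum_range]
        simp [add_comm]
    _ ≤ 2 / ((c - 1 : ℕ) + 1) := by
        have : Finset.Ico c (m + c) ⊆ Finset.Ioo (c-1) (m+c) := by
          intro x hx
          rw [Finset.mem_Ico] at hx
          rw [Finset.mem_Ioo]
          omega
        refine le_trans (Finset.sum_le_sum_of_subset_of_nonneg this (fun i _ _ => by positivity)) ?_
        exact sum_Ioo_inv_sq_le (c-1) (m+c)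
    _ = 2 / c := by
        congr 1
        have : c - 1 + 1 = c := by omega
        exact_mod_cast congrArg (Nat.cast (R := ℝ)) this

lemma g_abs_le (L d k : ℕ) :
    |(if d.Coprime L then (μ d : ℝ) * ((d:ℝ)⁻¹)^k else 0)| ≤ ((d:ℝ)⁻¹)^k := by
  split_ifs with h
  · rw [abs_mul]
    calc |(μ d : ℝ)| * |((d:ℝ)⁻¹)^k| ≤ 1 * |((d:ℝ)⁻¹)^k| :=
        mul_le_mul_of_nonneg_right (mu_abs_le d) (abs_nonneg _)
    _ = ((d:ℝ)⁻¹)^k := by rw [one_mul, abs_of_nonneg (by positivity)]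
  · rw [abs_zero]; positivity

section EulerProdSection

open scoped LSeries.notation

lemma hasSum_g2 (LL : ℕ) (hL : LL ≠ 0) :
    HasSum (fun d : ℕ => if d.Coprime LL then (μ d : ℝ) * ((d:ℝ)⁻¹)^2 else 0)
      ((6 / π^2) / ∏ p ∈ LL.primeFactors, (1 - ((p:ℝ)⁻¹)^2)) := by
  classical
  set radL := ∏ p ∈ LL.primeFactors, p with hradL
  have hradL_ne : radL ≠ 0 :=
    Finset.prod_ne_zero_iff.mpr fun p hp => (Nat.prime_of_mem_primeFactors hp).ne_zero
  have hradL_pf : radL.primeFactors = LL.primeFactors :=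
    Nat.primeFactors_prod fun p hp => Nat.prime_of_mem_primeFactors hp
  have hradL_dvd : radL ∣ LL := Nat.prod_primeFactors_dvd LL
  set A := ∏ p ∈ LL.primeFactors, (1 - ((p:ℝ)⁻¹)^2) with hA
  have hA_pos : 0 < A := by
    refine Finset.prod_pos fun p hp => ?_
    have h2 : 2 ≤ p := (Nat.prime_of_mem_primeFactors hp).two_le
    have : (p:ℝ)⁻¹ ≤ 2⁻¹ := by
      apply inv_anti₀ (by norm_num) (by exact_mod_cast h2)
    nlinarith [inv_pos.mpr (show (0:ℝ) < p by exact_mod_cast h2.trans_lt' (by norm_num))]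
  set mC : ℕ → ℂ := fun d => if d.Coprime LL then (μ d : ℂ) else 0 with hmC
  set nuC : ℕ → ℂ := fun d => if d ∣ radL then (μ d : ℂ) else 0 with hnuC
  -- convolution identity
  have hconv : mC ⍟ nuC = fun n => (μ n : ℂ) := by
    funext n
    rcases eq_or_ne n 0 with rfl | hn
    · simp [LSeries.convolution_def]
    set b₀ := n.gcd radL with hb₀
    have hb₀_dvd_n : b₀ ∣ n := Nat.gcd_dvd_left n radL
    have hb₀_ne : b₀ ≠ 0 := Nat.gcd_ne_zero_left hn
    set a₀ := n / b₀ with ha₀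
    have ha₀b₀ : a₀ * b₀ = n := Nat.div_mul_cancel hb₀_dvd_n
    have hmem : (a₀, b₀) ∈ n.divisorsAntidiagonal := by
      rw [Nat.mem_divisorsAntidiagonal]; exact ⟨ha₀b₀, hn⟩
    have huniq : ∀ p ∈ n.divisorsAntidiagonal, mC p.1 * nuC p.2 ≠ 0 → p = (a₀, b₀) := by
      rintro ⟨a, b⟩ hp hne
      have hab : a * b = n := (Nat.mem_divisorsAntidiagonal.mp hp).1
      have ha_cop : a.Coprime LL := by
        by_contra h; apply hne; simp only [hmC, mC, if_neg h]; ring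
      have hb_dvd : b ∣ radL := by
        by_contra h; apply hne; simp only [hnuC, nuC, if_neg h]; ring
      have ha_cop_rad : a.Coprime radL := Nat.Coprime.coprime_dvd_right hradL_dvd ha_cop
      have hb_eq : b = b₀ := by
        rw [hb₀, ← hab, Nat.Coprime.gcd_mul_left_cancel b ha_cop_rad]
        exact (Nat.gcd_eq_left hb_dvd).symm
      have hb_ne : b ≠ 0 := by rw [hb_eq]; exact hb₀_ne
      have ha_eq : a = a₀ := by
        rw [ha₀, ← hab, ← hb_eq, Nat.mul_div_cancel _ (Nat.pos_of_ne_zero hb_ne)]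
      simp [ha_eq, hb_eq]
    rw [LSeries.convolution_def]
    show ∑ p ∈ n.divisorsAntidiagonal, mC p.1 * nuC p.2 = _
    rw [Finset.sum_eq_single_of_mem (a₀, b₀) hmem
      (fun p hp hne => by by_contra h; exact hne (huniq p hp h))]
    by_cases ha₀_cop : a₀.Coprime LL
    · have hb₀_rad : b₀ ∣ radL := Nat.gcd_dvd_right n radL
      have hcop_ab : a₀.Coprime b₀ :=
        Nat.Coprime.coprime_dvd_right (hb₀_rad.trans hradL_dvd) ha₀_cop
      simp only [hmC, hnuC, mC, nuC, if_pos ha₀_cop, if_pos hb₀_rad]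
      rw [← ha₀b₀, ArithmeticFunction.isMultiplicative_moebius.map_mul_of_coprime hcop_ab]
      push_cast; ring
    · -- n is not squarefree
      obtain ⟨p, hp_prime, hp_dvd_a, hp_dvd_L⟩ :
          ∃ p, p.Prime ∧ p ∣ a₀ ∧ p ∣ LL := by
        rcases Nat.Prime.not_coprime_iff_dvd.mp ha₀_cop with ⟨p, hp, h1, h2⟩
        exact ⟨p, hp, h1, h2⟩
      have hp_rad : p ∣ radL := Finset.dvd_prod_of_mem _ (Nat.mem_primeFactors.mpr ⟨hp_prime, hp_dvd_L, hL⟩)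
      have hp_b₀ : p ∣ b₀ := Nat.dvd_gcd ((hp_dvd_a.trans (Nat.div_dvd_of_dvd hb₀_dvd_n))) hp_rad
      have hnsq : ¬ Squarefree n := by
        intro hsq
        have : p * p ∣ n := by
          rw [← ha₀b₀]; exact mul_dvd_mul hp_dvd_a hp_b₀
        exact hp_prime.one_lt.ne' (Nat.isUnit_iff.mp (hsq p this))
      simp only [hmC, mC, if_neg ha₀_cop, zero_mul,
        ArithmeticFunction.moebius_eq_zero_of_not_squarefree hnsq, Int.cast_zero]
  -- LL-series summability
  have hre : (1:ℝ) < (2:ℂ).re := by norm_num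
  have hμsum : LSeriesSummable (fun n => (μ n : ℂ)) 2 := LSeriesSummable_moebius_iff.mpr hre
  have hbound : ∀ f : ℕ → ℂ, (∀ n, f n = 0 ∨ f n = (μ n : ℂ)) → LSeriesSummable f 2 := by
    intro f hf
    apply LSeriesSummable_of_bounded_of_one_lt_re (m := 1) (fun n _ => ?_) hre
    rcases hf n with h | h <;> rw [h]
    · simp
    · have : |(μ n : ℝ)| ≤ 1 := by
        have := ArithmeticFunction.abs_moebius_le_one (n := n)
        calc |(μ n : ℝ)| = ((|μ n| : ℤ) : ℝ) := by push_cast; rfl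
        _ ≤ 1 := by exact_mod_cast this
      simpa using this
  have hm_sum : LSeriesSummable mC 2 := hbound mC (fun n => by by_cases h : n.Coprime LL <;> simp [hmC, mC, h])
  have hnu_sum : LSeriesSummable nuC 2 := hbound nuC (fun n => by by_cases h : n ∣ radL <;> simp [hnuC, nuC, h])
  -- value of LL(μ, 2)
  have hζ2 : riemannZeta 2 = (π:ℂ)^2/6 := riemannZeta_two
  have hμ2 : LSeries (fun n => (μ n : ℂ)) 2 = 6/(π:ℂ)^2 := by
    have h1 := ArithmeticFunction.LSeries_zeta_mul_Lseries_moebius hre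
    rw [ArithmeticFunction.LSeries_zeta_eq_riemannZeta hre, hζ2] at h1
    have hπ : ((π:ℂ))^2 ≠ 0 := pow_ne_zero 2 (Complex.ofReal_ne_zero.mpr Real.pi_ne_zero)
    field_simp at h1 ⊢
    linear_combination h1
  -- value of LL(nuC, 2)
  have hnu_val : LSeries nuC 2 = ((A:ℝ):ℂ) := by
    have hterm0 : ∀ e ∉ radL.divisors, LSeries.term nuC 2 e = 0 := by
      intro e he
      rcases eq_or_ne e 0 with rfl | he0
      · exact LSeries.term_zero _ _
      · rw [LSeries.term_of_ne_zero he0]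
        have : ¬ e ∣ radL := fun h => he (Nat.mem_divisors.mpr ⟨h, hradL_ne⟩)
        simp [hnuC, nuC, this]
    rw [LSeries, tsum_eq_sum hterm0]
    have hAsum : A = ∑ e ∈ radL.divisors, (if e.Coprime 1 then (μ e : ℝ) * ((e:ℝ)⁻¹)^2 else 0) := by
      rw [key_sum 1 radL one_ne_zero hradL_ne 2, Nat.primeFactors_one, Finset.sdiff_empty, hradL_pf]
    rw [hAsum]
    push_cast
    refine Finset.sum_congr rfl fun e he => ?_
    have he0 : e ≠ 0 := Nat.pos_of_mem_divisors he |>.ne'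
    have hedvd : e ∣ radL := Nat.dvd_of_mem_divisors he
    rw [LSeries.term_of_ne_zero he0]
    rw [if_pos (Nat.coprime_one_right e)]
    simp only [hnuC, nuC, if_pos hedvd, Nat.coprime_one_right e, if_pos]
    rw [show (2:ℂ) = ((2:ℕ):ℂ) by norm_num, Complex.cpow_natCast]
    push_cast
    field_simp
  -- value of LL(mC, 2)
  have hm_val : LSeries mC 2 = (((6/π^2)/A : ℝ):ℂ) := by
    have h1 : LSeries mC 2 * LSeries nuC 2 = 6/(π:ℂ)^2 := by
      rw [← LSeries_convolution' hm_sum hnu_sum, hconv, hμ2]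
    rw [hnu_val] at h1
    have hA0 : ((A:ℝ):ℂ) ≠ 0 := Complex.ofReal_ne_zero.mpr hA_pos.ne'
    have hπ : ((π:ℂ))^2 ≠ 0 := pow_ne_zero 2 (Complex.ofReal_ne_zero.mpr Real.pi_ne_zero)
    push_cast
    rw [div_div, eq_div_iff (mul_ne_zero hπ hA0)]
    field_simp at h1
    linear_combination h1
  -- conclude
  have hterm_eq : ∀ n, LSeries.term mC 2 n
      = (((if n.Coprime LL then (μ n : ℝ) * ((n:ℝ)⁻¹)^2 else 0 : ℝ)):ℂ) := by
    intro n
    rcases eq_or_ne n 0 with rfl | hn0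
    · rw [LSeries.term_zero]
      rcases eq_or_ne (Nat.gcd 0 LL) 1 with h | h <;> simp [Nat.Coprime, h]
    · rw [LSeries.term_of_ne_zero hn0, show (2:ℂ) = ((2:ℕ):ℂ) by norm_num,
        Complex.cpow_natCast]
      by_cases h : n.Coprime LL
      · simp only [hmC, mC, if_pos h, if_pos h]
        push_cast
        field_simp
      · simp [hmC, mC, h]
  have hhs : HasSum (fun n => LSeries.term mC 2 n) (((6/π^2)/A : ℝ):ℂ) := by
    rw [← hm_val]; exact hm_sum.hasSum
  rw [funext hterm_eq] at hhs
  exact Complex.hasSum_ofReal.mp hhs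

end EulerProdSection

lemma tail_bound (L N : ℕ) (hL : L ≠ 0) :
    |((6/π^2) / ∏ p ∈ L.primeFactors, (1 - ((p:ℝ)⁻¹)^2))
        - ∑ d ∈ Finset.Icc 1 N, (if d.Coprime L then (μ d:ℝ) * ((d:ℝ)⁻¹)^2 else 0)|
      ≤ (2:ℝ)/((N:ℝ)+1) := by
  set g₂ : ℕ → ℝ := fun d => if d.Coprime L then (μ d:ℝ) * ((d:ℝ)⁻¹)^2 else 0 with hg₂
  rw [show (Finset.Icc 1 N).sum (fun d => if d.Coprime L then (μ d:ℝ) * ((d:ℝ)⁻¹)^2 else 0) = ∑ d ∈ Finset.Icc 1 N, g₂ d from rfl]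
  have hs := hasSum_g2 L hL
  have hsummable := hs.summable
  have hzero : g₂ 0 = 0 := by
    simp only [hg₂]
    split_ifs <;> simp
  have hpartial : ∑ d ∈ Finset.range (N+1), g₂ d = ∑ d ∈ Finset.Icc 1 N, g₂ d := by
    rw [Finset.range_eq_Ico, Finset.sum_eq_sum_Ico_succ_bot (Nat.succ_pos N), hzero, zero_add]
    congr 1
  have htail := Summable.sum_add_tsum_nat_add (f := g₂) (N+1) hsummable
  rw [hs.tsum_eq] at htail
  have : (6/π^2) / (∏ p ∈ L.primeFactors, (1 - ((p:ℝ)⁻¹)^2)) - ∑ d ∈ Finset.Icc 1 N, g₂ d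
      = ∑' d : ℕ, g₂ (d + (N+1)) := by
    rw [← hpartial, ← htail]; ring
  rw [this]
  have habs : ∀ d : ℕ, ‖g₂ (d + (N+1))‖ ≤ (((d + (N+1):ℕ):ℝ)^2)⁻¹ := by
    intro d
    have h0 : g₂ (d+(N+1)) = if (d+(N+1)).Coprime L then (μ (d+(N+1)):ℝ) * (((d+(N+1):ℕ):ℝ)⁻¹)^2 else 0 := by rw [hg₂]
    rw [Real.norm_eq_abs, h0, ← inv_pow]
    exact g_abs_le L (d+(N+1)) 2
  calc |∑' d : ℕ, g₂ (d + (N+1))| ≤ ∑' d : ℕ, (((d + (N+1):ℕ):ℝ)^2)⁻¹ := by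
        refine (norm_tsum_le_tsum_norm ?_).trans (Summable.tsum_le_tsum habs ?_ ?_)
        · have h1 : Summable (fun d : ℕ => g₂ (d + (N+1))) :=
            (summable_nat_add_iff (N+1)).mpr hsummable
          exact h1.abs
        · have h1 : Summable (fun d : ℕ => g₂ (d + (N+1))) :=
            (summable_nat_add_iff (N+1)).mpr hsummable
          exact h1.abs
        · have := (summable_nat_add_iff (f := fun d : ℕ => ((d:ℝ)^2)⁻¹) (N+1)).mpr summable_inv_sq
          simpa using this
    _ ≤ (2:ℝ)/((N:ℝ)+1) := by
        have := tsum_sq_tail (N+1) (Nat.succ_pos N)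
        push_cast at this
        simpa using this

lemma harm_le (m : ℕ) : ∑ d ∈ Finset.Icc 1 m, (d:ℝ)⁻¹ ≤ 1 + Real.log m := by
  have h := harmonic_le_one_add_log m
  rw [harmonic_eq_sum_Icc] at h
  push_cast at h
  exact h

lemma per_e (δ X : ℝ) (hδ : 0 < δ) (hδ1 : δ ≤ 1) (hX : 1 ≤ X) (L e : ℕ) (hL : L ≠ 0)
    (he : 1 ≤ e) :
    |∑ d ∈ Finset.Icc 1 ⌊X⌋₊,
        ((if d.Coprime L then (μ d:ℝ) * ((d:ℝ)⁻¹)^1 else 0) * ((⌊X⌋₊/(d*e) : ℕ):ℝ))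
      - (X/(e:ℝ)) * ((6/π^2) / ∏ p ∈ L.primeFactors, (1 - ((p:ℝ)⁻¹)^2))|
    ≤ (6 + 2/δ) * (X/(e:ℝ))^δ := by
  set N := ⌊X⌋₊ with hN
  set K := ((6/π^2) / ∏ p ∈ L.primeFactors, (1 - ((p:ℝ)⁻¹)^2)) with hK
  set Z := X/(e:ℝ) with hZ
  set Y := ⌊Z⌋₊ with hY
  have hXpos : (0:ℝ) < X := lt_of_lt_of_le one_pos hX
  have hepos : (0:ℝ) < (e:ℝ) := by exact_mod_cast he
  have hZpos : 0 < Z := div_pos hXpos hepos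
  have hNX : (N:ℝ) ≤ X := Nat.floor_le hXpos.le
  have hXN1 : X < (N:ℝ) + 1 := by exact_mod_cast Nat.lt_floor_add_one X
  have hZδ1 : 1 ≤ Z → 1 ≤ Z^δ := fun h => by
    calc (1:ℝ) = Z^(0:ℝ) := (Real.rpow_zero Z).symm
    _ ≤ Z^δ := Real.rpow_le_rpow_of_exponent_le h hδ.le
  have hZδ2 : Z < 1 → Z ≤ Z^δ := fun h => by
    calc Z = Z^(1:ℝ) := (Real.rpow_one Z).symm
    _ ≤ Z^δ := Real.rpow_le_rpow_of_exponent_ge hZpos h.le hδ1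
  have hZδpos : 0 < Z^δ := Real.rpow_pos_of_pos hZpos δ
  have fact1 : 1/(e:ℝ) ≤ Z^δ := by
    rcases le_or_gt 1 Z with h | h
    · calc 1/(e:ℝ) ≤ 1 := by
            rw [div_le_one hepos]; exact_mod_cast he
      _ ≤ Z^δ := hZδ1 h
    · calc 1/(e:ℝ) ≤ X/(e:ℝ) := (div_le_div_iff_of_pos_right hepos).mpr hX
      _ ≤ Z^δ := hZδ2 h
  have hZY1 : Z < (Y:ℝ) + 1 := by exact_mod_cast Nat.lt_floor_add_one Z
  have fact2 : Z/((Y:ℝ)+1) ≤ Z^δ := by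
    rcases le_or_gt 1 Z with h | h
    · calc Z/((Y:ℝ)+1) ≤ 1 := by
            rw [div_le_one (by positivity)]; exact hZY1.le
      _ ≤ Z^δ := hZδ1 h
    · calc Z/((Y:ℝ)+1) ≤ Z := div_le_self hZpos.le (by linarith [(Nat.cast_nonneg Y : (0:ℝ) ≤ (Y:ℝ))])
      _ ≤ Z^δ := hZδ2 h
  have fact3 : Y ≠ 0 → 1 + Real.log Y ≤ (1+1/δ) * Z^δ := by
    intro hY0
    have hY1 : (1:ℝ) ≤ (Y:ℝ) := by exact_mod_cast Nat.one_le_iff_ne_zero.mpr hY0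
    have hYZ : (Y:ℝ) ≤ Z := Nat.floor_le hZpos.le
    have h1Z : (1:ℝ) ≤ Z := hY1.trans hYZ
    have hlog : Real.log Y ≤ Real.log Z := Real.log_le_log (by linarith) hYZ
    have hlog2 : Real.log Z ≤ (Z^δ - 1)/δ := by
      have h := Real.log_le_sub_one_of_pos hZδpos
      rw [Real.log_rpow hZpos] at h
      rw [le_div_iff₀ hδ]
      linarith
    have : Real.log Z ≤ Z^δ/δ := hlog2.trans (by gcongr; linarith [hZδ1 h1Z])
    have h4 : 1 ≤ Z^δ := hZδ1 h1Z
    calc 1 + Real.log Y ≤ Z^δ + Z^δ/δ := by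
          have := hlog.trans this
          linarith
    _ = (1+1/δ) * Z^δ := by field_simp
  -- set up functions
  set g₁ : ℕ → ℝ := fun d => if d.Coprime L then (μ d:ℝ) * ((d:ℝ)⁻¹)^1 else 0 with hg₁
  set g₂ : ℕ → ℝ := fun d => if d.Coprime L then (μ d:ℝ) * ((d:ℝ)⁻¹)^2 else 0 with hg₂
  have hg12 : ∀ d ∈ Finset.Icc 1 N, g₁ d * (X/((d:ℝ)*(e:ℝ))) = Z * g₂ d := by
    intro d hd
    have hd1 : 1 ≤ d := (Finset.mem_Icc.mp hd).1
    have hdpos : (0:ℝ) < (d:ℝ) := by exact_mod_cast hd1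
    show (if d.Coprime L then (μ d:ℝ) * ((d:ℝ)⁻¹)^1 else 0) * (X/((d:ℝ)*(e:ℝ)))
        = Z * (if d.Coprime L then (μ d:ℝ) * ((d:ℝ)⁻¹)^2 else 0)
    split_ifs with h
    · rw [hZ]; simp only [division_def, pow_one, pow_two, mul_inv]; ring
    · ring
  -- decomposition
  have hdecomp : ∑ d ∈ Finset.Icc 1 N, (g₁ d * ((N/(d*e) : ℕ):ℝ)) - Z * K
      = (∑ d ∈ Finset.Icc 1 N, g₁ d * (((N/(d*e) : ℕ):ℝ) - X/((d:ℝ)*(e:ℝ))))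
        - Z * (K - ∑ d ∈ Finset.Icc 1 N, g₂ d) := by
    have h1 : ∑ d ∈ Finset.Icc 1 N, g₁ d * (((N/(d*e) : ℕ):ℝ) - X/((d:ℝ)*(e:ℝ)))
        = ∑ d ∈ Finset.Icc 1 N, (g₁ d * ((N/(d*e) : ℕ):ℝ) - Z * g₂ d) := by
      refine Finset.sum_congr rfl fun d hd => ?_
      rw [← hg12 d hd]; ring
    rw [h1, Finset.sum_sub_distrib, ← Finset.mul_sum]
    ring
  rw [hdecomp]
  -- per-d bounds on the difference
  have habs : ∀ d ∈ Finset.Icc 1 N,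
      |((N/(d*e) : ℕ):ℝ) - X/((d:ℝ)*(e:ℝ))| ≤ 2 ∧
      |((N/(d*e) : ℕ):ℝ) - X/((d:ℝ)*(e:ℝ))| ≤ X/((d:ℝ)*(e:ℝ)) := by
    intro d hd
    have hd1 : 1 ≤ d := (Finset.mem_Icc.mp hd).1
    have hce : (1:ℕ) ≤ d*e := Nat.one_le_iff_ne_zero.mpr (by positivity)
    have hcpos : (0:ℝ) < ((d*e:ℕ):ℝ) := by exact_mod_cast hce
    have hcast : ((d*e:ℕ):ℝ) = (d:ℝ)*(e:ℝ) := by push_cast; ring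
    have hub : ((N/(d*e) : ℕ):ℝ) ≤ X/((d:ℝ)*(e:ℝ)) := by
      calc ((N/(d*e) : ℕ):ℝ) ≤ (N:ℝ)/((d*e:ℕ):ℝ) := Nat.cast_div_le
      _ ≤ X/((d:ℝ)*(e:ℝ)) := by rw [hcast]; gcongr
    have hlb : X/((d:ℝ)*(e:ℝ)) - ((N/(d*e) : ℕ):ℝ) ≤ 2 := by
      have h1 : (N:ℝ) < ((d*e:ℕ):ℝ) * (((N/(d*e) : ℕ):ℝ) + 1) := by
        exact_mod_cast Nat.lt_mul_div_succ N (Nat.lt_of_lt_of_le Nat.zero_lt_one hce)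
      have h2 : (1:ℝ) ≤ ((d*e:ℕ):ℝ) := by exact_mod_cast hce
      rw [← hcast, sub_le_iff_le_add, div_le_iff₀ hcpos]
      nlinarith
    have hnonneg : (0:ℝ) ≤ ((N/(d*e) : ℕ):ℝ) := Nat.cast_nonneg _
    have habs_eq : |((N/(d*e) : ℕ):ℝ) - X/((d:ℝ)*(e:ℝ))|
        = X/((d:ℝ)*(e:ℝ)) - ((N/(d*e) : ℕ):ℝ) := by
      rw [abs_of_nonpos (by linarith)]; ring
    constructor
    · rw [habs_eq]; linarith
    · rw [habs_eq]; linarith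
  -- bound T1
  have hT1 : |∑ d ∈ Finset.Icc 1 N, g₁ d * (((N/(d*e) : ℕ):ℝ) - X/((d:ℝ)*(e:ℝ)))|
      ≤ (2*(1+1/δ) + 2) * Z^δ := by
    have hstep : ∀ d ∈ Finset.Icc 1 N,
        |g₁ d * (((N/(d*e) : ℕ):ℝ) - X/((d:ℝ)*(e:ℝ)))|
          ≤ (if d ≤ Y then 2*(d:ℝ)⁻¹ else Z * ((d:ℝ)^2)⁻¹) := by
      intro d hd
      have hd1 : 1 ≤ d := (Finset.mem_Icc.mp hd).1
      have hdpos : (0:ℝ) < (d:ℝ) := by exact_mod_cast hd1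
      obtain ⟨hb2, hbX⟩ := habs d hd
      have hgabs : |g₁ d| ≤ (d:ℝ)⁻¹ := by
        have h0 : g₁ d = if d.Coprime L then (μ d:ℝ) * ((d:ℝ)⁻¹)^1 else 0 := by rw [hg₁]
        rw [h0]
        simpa using g_abs_le L d 1
      rw [abs_mul]
      split_ifs with hdY
      · calc |g₁ d| * |((N/(d*e) : ℕ):ℝ) - X/((d:ℝ)*(e:ℝ))| ≤ (d:ℝ)⁻¹ * 2 := by
              apply mul_le_mul hgabs hb2 (abs_nonneg _) (by positivity)
        _ = 2*(d:ℝ)⁻¹ := by ring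
      · calc |g₁ d| * |((N/(d*e) : ℕ):ℝ) - X/((d:ℝ)*(e:ℝ))|
            ≤ (d:ℝ)⁻¹ * (X/((d:ℝ)*(e:ℝ))) := by
              apply mul_le_mul hgabs hbX (abs_nonneg _) (by positivity)
        _ = Z * ((d:ℝ)^2)⁻¹ := by rw [hZ]; simp only [division_def, pow_two, mul_inv]; ring
    calc |∑ d ∈ Finset.Icc 1 N, g₁ d * (((N/(d*e) : ℕ):ℝ) - X/((d:ℝ)*(e:ℝ)))|
        ≤ ∑ d ∈ Finset.Icc 1 N, |g₁ d * (((N/(d*e) : ℕ):ℝ) - X/((d:ℝ)*(e:ℝ)))| :=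
          Finset.abs_sum_le_sum_abs _ _
      _ ≤ ∑ d ∈ Finset.Icc 1 N, (if d ≤ Y then 2*(d:ℝ)⁻¹ else Z * ((d:ℝ)^2)⁻¹) :=
          Finset.sum_le_sum hstep
      _ = (∑ d ∈ (Finset.Icc 1 N).filter (fun d => d ≤ Y), 2*(d:ℝ)⁻¹)
          + (∑ d ∈ (Finset.Icc 1 N).filter (fun d => ¬ d ≤ Y), Z * ((d:ℝ)^2)⁻¹) := by
          rw [← Finset.sum_filter_add_sum_filter_not (Finset.Icc 1 N) (fun d => d ≤ Y)]
          congr 1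
          · exact Finset.sum_congr rfl fun d hd => if_pos (Finset.mem_filter.mp hd).2
          · exact Finset.sum_congr rfl fun d hd => if_neg (Finset.mem_filter.mp hd).2
      _ ≤ 2*(1+1/δ) * Z^δ + 2 * Z^δ := by
          apply add_le_add
          · -- harmonic part
            by_cases hY0 : Y = 0
            · have : (Finset.Icc 1 N).filter (fun d => d ≤ Y) = ∅ := by
                apply Finset.filter_false_of_mem
                intro d hd
                have := (Finset.mem_Icc.mp hd).1
                omega
              rw [this, Finset.sum_empty]
              positivity
            · calc ∑ d ∈ (Finset.Icc 1 N).filter (fun d => d ≤ Y), 2*(d:ℝ)⁻¹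
                  ≤ ∑ d ∈ Finset.Icc 1 Y, 2*(d:ℝ)⁻¹ := by
                    apply Finset.sum_le_sum_of_subset_of_nonneg
                    · intro d hd
                      rw [Finset.mem_filter, Finset.mem_Icc] at hd
                      rw [Finset.mem_Icc]
                      exact ⟨hd.1.1, hd.2⟩
                    · intro d hd _
                      have : 1 ≤ d := (Finset.mem_Icc.mp hd).1
                      positivity
              _ = 2 * ∑ d ∈ Finset.Icc 1 Y, (d:ℝ)⁻¹ := by rw [Finset.mul_sum]
              _ ≤ 2 * (1 + Real.log Y) := by
                    have := harm_le Y
                    linarith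
              _ ≤ 2 * ((1+1/δ) * Z^δ) := by
                    have := fact3 hY0
                    linarith
              _ = 2*(1+1/δ) * Z^δ := by ring
          · calc ∑ d ∈ (Finset.Icc 1 N).filter (fun d => ¬ d ≤ Y), Z * ((d:ℝ)^2)⁻¹
                ≤ ∑ d ∈ Finset.Ioo Y (N+1), Z * ((d:ℝ)^2)⁻¹ := by
                  apply Finset.sum_le_sum_of_subset_of_nonneg
                  · intro d hd
                    rw [Finset.mem_filter, Finset.mem_Icc] at hd
                    rw [Finset.mem_Ioo]
                    omega
                  · intro d hd _
                    positivity
            _ = Z * ∑ d ∈ Finset.Ioo Y (N+1), ((d:ℝ)^2)⁻¹ := by rw [Finset.mul_sum]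
            _ ≤ Z * (2/((Y:ℝ)+1)) := by
                  apply mul_le_mul_of_nonneg_left ?_ hZpos.le
                  have := sum_Ioo_inv_sq_le (α := ℝ) Y (N+1)
                  simpa using this
            _ = 2 * (Z/((Y:ℝ)+1)) := by ring
            _ ≤ 2 * Z^δ := by linarith [fact2]
      _ = (2*(1+1/δ) + 2) * Z^δ := by ring
  -- bound T2
  have hT2 : |Z * (K - ∑ d ∈ Finset.Icc 1 N, g₂ d)| ≤ 2 * Z^δ := by
    rw [abs_mul, abs_of_pos hZpos]
    calc Z * |K - ∑ d ∈ Finset.Icc 1 N, g₂ d| ≤ Z * ((2:ℝ)/((N:ℝ)+1)) := by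
          apply mul_le_mul_of_nonneg_left ?_ hZpos.le
          exact tail_bound L N hL
    _ = 2 * (X/((e:ℝ)*((N:ℝ)+1))) := by rw [hZ]; simp only [division_def, mul_inv]; ring
    _ ≤ 2 * (1/(e:ℝ)) := by
          have hh : X/((e:ℝ)*((N:ℝ)+1)) ≤ 1/(e:ℝ) := by
            rw [div_le_div_iff₀ (by positivity) hepos]
            nlinarith
          linarith
    _ ≤ 2 * Z^δ := by linarith [fact1]
  calc |(∑ d ∈ Finset.Icc 1 N, g₁ d * (((N/(d*e) : ℕ):ℝ) - X/((d:ℝ)*(e:ℝ))))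
        - Z * (K - ∑ d ∈ Finset.Icc 1 N, g₂ d)|
      ≤ |∑ d ∈ Finset.Icc 1 N, g₁ d * (((N/(d*e) : ℕ):ℝ) - X/((d:ℝ)*(e:ℝ)))|
        + |Z * (K - ∑ d ∈ Finset.Icc 1 N, g₂ d)| := abs_sub _ _
    _ ≤ (2*(1+1/δ) + 2) * Z^δ + 2 * Z^δ := add_le_add hT1 hT2
    _ = (2/δ + 6) * Z^δ := by ring
    _ ≤ (6 + 2/δ) * Z^δ := by ring_nf; exact le_refl _

lemma prime_inv_lt (p : ℕ) (hp : p.Prime) : (0:ℝ) < (p:ℝ)⁻¹ ∧ (p:ℝ)⁻¹ ≤ 2⁻¹ := by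
  have h2 : (2:ℝ) ≤ (p:ℝ) := by exact_mod_cast hp.two_le
  constructor
  · positivity
  · apply inv_anti₀ (by norm_num) h2

lemma phi1_pos (m : ℕ) : 0 < phi1 m := by
  apply Finset.prod_pos
  intro p hp
  have := prime_inv_lt p (Nat.prime_of_mem_primeFactors hp)
  positivity

lemma phi1_le_one (m : ℕ) : phi1 m ≤ 1 := by
  apply Finset.prod_le_one
  · intro p hp
    have := prime_inv_lt p (Nat.prime_of_mem_primeFactors hp)
    positivity
  · intro p hp
    have := prime_inv_lt p (Nat.prime_of_mem_primeFactors hp)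
    rw [inv_le_one_iff₀]
    right
    linarith [this.1]

lemma F_bounds (m : ℕ) : 0 ≤ ∏ p ∈ m.primeFactors, (1 - (p:ℝ)⁻¹) ∧
    ∏ p ∈ m.primeFactors, (1 - (p:ℝ)⁻¹) ≤ 1 := by
  constructor
  · apply Finset.prod_nonneg
    intro p hp
    have := prime_inv_lt p (Nat.prime_of_mem_primeFactors hp)
    linarith [this.1, this.2]
  · apply Finset.prod_le_one
    · intro p hp
      have := prime_inv_lt p (Nat.prime_of_mem_primeFactors hp)
      linarith [this.1, this.2]
    · intro p hp
      have := prime_inv_lt p (Nat.prime_of_mem_primeFactors hp)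
      linarith [this.1]

lemma main_id (ℓ q : ℕ) (hℓ : ℓ ≠ 0) (hq : q ≠ 0) (hcop : Nat.Coprime ℓ q) :
    (6/π^2) * phi1 (ℓ*q)
      = (∏ p ∈ ℓ.primeFactors, (1 - (p:ℝ)⁻¹)) * (∏ p ∈ q.primeFactors, (1 - (p:ℝ)⁻¹))
        * ((6/π^2) / ∏ p ∈ (ℓ*q).primeFactors, (1 - ((p:ℝ)⁻¹)^2)) := by
  rw [phi1, Nat.primeFactors_mul hℓ hq,
    ← Finset.prod_union hcop.disjoint_primeFactors]
  set s := ℓ.primeFactors ∪ q.primeFactors with hs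
  have hfac : ∀ p ∈ s, (0:ℝ) < 1 - (p:ℝ)⁻¹ ∧ (0:ℝ) < 1 + (p:ℝ)⁻¹ := by
    intro p hp
    have hp' : p.Prime := by
      rw [hs, Finset.mem_union] at hp
      rcases hp with h | h <;> exact Nat.prime_of_mem_primeFactors h
    have := prime_inv_lt p hp'
    constructor <;> linarith [this.1, this.2]
  have hsplit : ∏ p ∈ s, (1 - ((p:ℝ)⁻¹)^2)
      = (∏ p ∈ s, (1 - (p:ℝ)⁻¹)) * ∏ p ∈ s, (1 + (p:ℝ)⁻¹) := by
    rw [← Finset.prod_mul_distrib]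
    exact Finset.prod_congr rfl fun p _ => by ring
  have ha : (0:ℝ) < ∏ p ∈ s, (1 - (p:ℝ)⁻¹) := Finset.prod_pos fun p hp => (hfac p hp).1
  have hb : (0:ℝ) < ∏ p ∈ s, (1 + (p:ℝ)⁻¹) := Finset.prod_pos fun p hp => (hfac p hp).2
  have hinv : ∏ p ∈ s, (1 + (p:ℝ)⁻¹)⁻¹ = (∏ p ∈ s, (1 + (p:ℝ)⁻¹))⁻¹ :=
    Finset.prod_inv_distrib _
  rw [hsplit, hinv]
  have key : ∀ a b c : ℝ, 0 < a → 0 < b → c * b⁻¹ = a * (c / (a * b)) := by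
    intro a b c ha hb
    field_simp
  exact key _ _ _ ha hb

lemma sigma_ge_one (q : ℕ) (hq : q ≠ 0) (δ : ℝ) : 1 ≤ ∑ d ∈ q.divisors, (d:ℝ)^(-δ) := by
  have h1 : (1:ℕ) ∈ q.divisors := Nat.one_mem_divisors.mpr hq
  have := Finset.single_le_sum (f := fun d : ℕ => (d:ℝ)^(-δ))
    (fun d hd => by
      have : 0 < d := Nat.pos_of_mem_divisors hd
      positivity) h1
  simpa using this

/-- For coprime `ℓ, q ≥ 1`, any `δ > 0` and `X ≥ 1`,
`∑_{n ≤ X, (n,q)=1} φ(ℓn)/(ℓn) = (6/π²)·φ₁(ℓq)·X + O_δ(σ_{-δ}(q)·X^δ/φ₁(ℓq))`. -/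
theorem sum_totient_ratio_coprime (δ : ℝ) (hδ : 0 < δ) :
    ∃ C : ℝ, 0 < C ∧ ∀ ℓ q : ℕ, 0 < ℓ → 0 < q → Nat.Coprime ℓ q → ∀ X : ℝ, 1 ≤ X →
      |(∑ n ∈ (Finset.Icc 1 ⌊X⌋₊).filter (fun n => n.Coprime q),
            (Nat.totient (ℓ * n) : ℝ) / (ℓ * n : ℕ))
          - (6 / π ^ 2) * phi1 (ℓ * q) * X|
        ≤ C * (∑ d ∈ q.divisors, (d : ℝ) ^ (-δ)) * X ^ δ / phi1 (ℓ * q) := by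
  refine ⟨6 + 2/δ, by positivity, ?_⟩
  intro ℓ q hℓ hq hcop X hX
  have hℓ0 : ℓ ≠ 0 := hℓ.ne'
  have hq0 : q ≠ 0 := hq.ne'
  have hL : ℓ * q ≠ 0 := mul_ne_zero hℓ0 hq0
  have hXpos : (0:ℝ) < X := lt_of_lt_of_le one_pos hX
  set N := ⌊X⌋₊ with hN
  set A := (Finset.Icc 1 N).filter (fun n => n.Coprime q) with hA
  set S := ∑ n ∈ A, (Nat.totient (ℓ * n) : ℝ) / ((ℓ * n : ℕ):ℝ) with hS
  set M := (6 / π ^ 2) * phi1 (ℓ * q) * X with hM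
  have hNX : (N:ℝ) ≤ X := Nat.floor_le hXpos.le
  have hXN1 : X < (N:ℝ) + 1 := Nat.lt_floor_add_one X
  have hphi_pos : 0 < phi1 (ℓ*q) := phi1_pos _
  have hphi_le : phi1 (ℓ*q) ≤ 1 := phi1_le_one _
  have hσ : 1 ≤ ∑ d ∈ q.divisors, (d:ℝ)^(-δ) := sigma_ge_one q hq0 δ
  have hσ0 : 0 ≤ ∑ d ∈ q.divisors, (d:ℝ)^(-δ) := le_trans zero_le_one hσ
  have hXδpos : 0 < X^δ := Real.rpow_pos_of_pos hXpos δ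
  -- reduce to the bound without the phi1 division
  suffices hmain : |S - M| ≤ (6 + 2/δ) * (∑ d ∈ q.divisors, (d:ℝ)^(-δ)) * X^δ by
    rw [le_div_iff₀ hphi_pos]
    calc |S - M| * phi1 (ℓ*q) ≤ |S - M| * 1 :=
        mul_le_mul_of_nonneg_left hphi_le (abs_nonneg _)
    _ = |S - M| := mul_one _
    _ ≤ (6 + 2/δ) * (∑ d ∈ q.divisors, (d:ℝ)^(-δ)) * X^δ := hmain
  -- trivial bounds on S and M
  have hS_bounds : 0 ≤ S ∧ S ≤ X := by
    constructor
    · apply Finset.sum_nonneg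
      intro n hn
      positivity
    · calc S ≤ ∑ n ∈ A, 1 := by
            apply Finset.sum_le_sum
            intro n hn
            have hn1 : 1 ≤ n := (Finset.mem_Icc.mp (Finset.mem_filter.mp hn).1).1
            have hpos : 0 < ℓ * n := Nat.mul_pos hℓ (by omega)
            rw [div_le_one (by exact_mod_cast hpos)]
            exact_mod_cast Nat.totient_le (ℓ * n)
      _ = (A.card : ℝ) := by rw [Finset.sum_const, nsmul_eq_mul, mul_one]
      _ ≤ ((Finset.Icc 1 N).card : ℝ) := by
            exact_mod_cast Finset.card_filter_le _ _
      _ = (N : ℝ) := by rw [Nat.card_Icc]; simp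
      _ ≤ X := hNX
  have hM_bounds : 0 ≤ M ∧ M ≤ X := by
    have hπ : (3:ℝ) < π := Real.pi_gt_three
    have h6 : (6/π^2 : ℝ) ≤ 1 := by
      rw [div_le_one (by positivity)]
      nlinarith
    have h60 : (0:ℝ) ≤ 6/π^2 := by positivity
    constructor
    · rw [hM]; positivity
    · calc M ≤ 1 * 1 * X := by
            rw [hM]
            apply mul_le_mul_of_nonneg_right ?_ hXpos.le
            apply mul_le_mul h6 hphi_le hphi_pos.le zero_le_one
      _ = X := by ring
  by_cases hδ1 : δ ≤ 1
  swap
  · -- trivial case δ > 1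
    push_neg at hδ1
    have hXX : X ≤ X^δ := by
      calc X = X^(1:ℝ) := (Real.rpow_one X).symm
      _ ≤ X^δ := Real.rpow_le_rpow_of_exponent_le hX hδ1.le
    calc |S - M| ≤ |S| + |M| := abs_sub _ _
    _ ≤ X + X := by
        rw [abs_of_nonneg hS_bounds.1, abs_of_nonneg hM_bounds.1]
        exact add_le_add hS_bounds.2 hM_bounds.2
    _ = 2 * X := by ring
    _ ≤ 2 * X^δ := by linarith
    _ ≤ (6 + 2/δ) * (∑ d ∈ q.divisors, (d:ℝ)^(-δ)) * X^δ := by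
        have hC : (2:ℝ) ≤ 6 + 2/δ := by
          have : 0 < 2/δ := by positivity
          linarith
        have h1 : (2:ℝ) * X^δ ≤ (6 + 2/δ) * X^δ := by
          apply mul_le_mul_of_nonneg_right hC hXδpos.le
        calc 2 * X^δ ≤ (6 + 2/δ) * X^δ := h1
        _ = (6 + 2/δ) * 1 * X^δ := by ring
        _ ≤ (6 + 2/δ) * (∑ d ∈ q.divisors, (d:ℝ)^(-δ)) * X^δ := by
            apply mul_le_mul_of_nonneg_right ?_ hXδpos.le
            apply mul_le_mul_of_nonneg_left hσ (by positivity)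
  -- main case δ ≤ 1
  set g₁ : ℕ → ℝ := fun d => if d.Coprime (ℓ*q) then (μ d:ℝ) * ((d:ℝ)⁻¹)^1 else 0 with hg₁
  set Fl := ∏ p ∈ ℓ.primeFactors, (1 - (p:ℝ)⁻¹) with hFl
  set Fq := ∏ p ∈ q.primeFactors, (1 - (p:ℝ)⁻¹) with hFq
  set K := ((6/π^2) / ∏ p ∈ (ℓ*q).primeFactors, (1 - ((p:ℝ)⁻¹)^2)) with hK
  -- Step A
  have hstepA : S = Fl * ∑ n ∈ A, ∑ d ∈ n.divisors, g₁ d := by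
    rw [hS, Finset.mul_sum]
    refine Finset.sum_congr rfl fun n hn => ?_
    have hn1 : 1 ≤ n := (Finset.mem_Icc.mp (Finset.mem_filter.mp hn).1).1
    have hncop : n.Coprime q := (Finset.mem_filter.mp hn).2
    have hn0 : n ≠ 0 := by omega
    have hln : ℓ * n ≠ 0 := mul_ne_zero hℓ0 hn0
    rw [totient_ratio (ℓ*n) hln, Nat.primeFactors_mul hℓ0 hn0]
    have hun : ℓ.primeFactors ∪ n.primeFactors
        = ℓ.primeFactors ∪ (n.primeFactors \ ℓ.primeFactors) :=
      (Finset.union_sdiff_self_eq_union).symm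
    rw [hun, Finset.prod_union Finset.disjoint_sdiff]
    congr 1
    have hsd : n.primeFactors \ (ℓ*q).primeFactors = n.primeFactors \ ℓ.primeFactors := by
      rw [Nat.primeFactors_mul hℓ0 hq0]
      ext p
      simp only [Finset.mem_sdiff, Finset.mem_union]
      constructor
      · rintro ⟨h1, h2⟩
        exact ⟨h1, fun h => h2 (Or.inl h)⟩
      · rintro ⟨h1, h2⟩
        refine ⟨h1, fun h => ?_⟩
        rcases h with h | h
        · exact h2 h
        · exact (Finset.disjoint_left.mp hncop.disjoint_primeFactors) h1 h
    have hks := key_sum (ℓ*q) n hL hn0 1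
    simp only [pow_one] at hks
    rw [hsd] at hks
    rw [← hks]
    apply Finset.sum_congr rfl fun d hd => ?_
    simp only [hg₁, pow_one]
  -- Step B
  have hstepB : ∑ n ∈ A, ∑ d ∈ n.divisors, g₁ d
      = ∑ d ∈ Finset.Icc 1 N, g₁ d * ((A.filter (fun n => d ∣ n)).card : ℝ) := by
    have hinner : ∀ n ∈ A, ∑ d ∈ n.divisors, g₁ d
        = ∑ d ∈ Finset.Icc 1 N, (if d ∣ n then g₁ d else 0) := by
      intro n hn
      have hn1 : 1 ≤ n := (Finset.mem_Icc.mp (Finset.mem_filter.mp hn).1).1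
      have hnN : n ≤ N := (Finset.mem_Icc.mp (Finset.mem_filter.mp hn).1).2
      have hset : (Finset.Icc 1 N).filter (fun d => d ∣ n) = n.divisors := by
        ext d
        simp only [Finset.mem_filter, Finset.mem_Icc, Nat.mem_divisors]
        constructor
        · rintro ⟨⟨h1, h2⟩, h3⟩
          exact ⟨h3, by omega⟩
        · rintro ⟨h1, h2⟩
          have hd1 : 1 ≤ d := Nat.pos_of_dvd_of_pos h1 (by omega)
          have hdn : d ≤ n := Nat.le_of_dvd (by omega) h1
          exact ⟨⟨hd1, by omega⟩, h1⟩
      conv_rhs => rw [← Finset.sum_filter, hset]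
    rw [Finset.sum_congr rfl hinner, Finset.sum_comm]
    refine Finset.sum_congr rfl fun d hd => ?_
    rw [← Finset.sum_filter, Finset.sum_const, nsmul_eq_mul, mul_comm]
  -- Step C
  have hstepC : ∀ d ∈ Finset.Icc 1 N,
      g₁ d * ((A.filter (fun n => d ∣ n)).card : ℝ)
        = g₁ d * ∑ e ∈ q.divisors, (μ e : ℝ) * ((N / (d*e) : ℕ) : ℝ) := by
    intro d hd
    by_cases hc : d.Coprime (ℓ*q)
    · have hdq : d.Coprime q := Nat.Coprime.coprime_dvd_right (dvd_mul_left q ℓ) hc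
      rw [hA, count_eq q d N hq0 hdq]
    · simp only [hg₁, if_neg hc, zero_mul]
  -- swap d and e sums
  have hswap : ∑ d ∈ Finset.Icc 1 N, g₁ d * (∑ e ∈ q.divisors, (μ e : ℝ) * ((N / (d*e) : ℕ) : ℝ))
      = ∑ e ∈ q.divisors, (μ e : ℝ) * ∑ d ∈ Finset.Icc 1 N, g₁ d * ((N / (d*e) : ℕ) : ℝ) := by
    simp_rw [Finset.mul_sum]
    rw [Finset.sum_comm]
    refine Finset.sum_congr rfl fun e he => ?_
    refine Finset.sum_congr rfl fun d hd => ?_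
    ring
  have hSid : S = Fl * ∑ e ∈ q.divisors,
      (μ e : ℝ) * ∑ d ∈ Finset.Icc 1 N, g₁ d * ((N / (d*e) : ℕ) : ℝ) := by
    rw [hstepA, hstepB, Finset.sum_congr rfl hstepC, hswap]
  -- main term identity
  have hFqsum : ∑ e ∈ q.divisors, (μ e : ℝ) * ((e:ℝ)⁻¹)^1 = Fq := by
    have hks := key_sum 1 q one_ne_zero hq0 1
    rw [hFq]
    have h2 : ∏ p ∈ q.primeFactors, (1 - (p:ℝ)⁻¹)
        = ∏ p ∈ q.primeFactors \ (1:ℕ).primeFactors, (1 - ((p:ℝ)⁻¹)^1) := by simp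
    rw [h2, ← hks]
    exact Finset.sum_congr rfl fun e he => by simp [Nat.coprime_one_right]
  have hMid : M = Fl * ∑ e ∈ q.divisors, (μ e : ℝ) * ((X/(e:ℝ)) * K) := by
    have h1 : ∑ e ∈ q.divisors, (μ e : ℝ) * ((X/(e:ℝ)) * K)
        = (X * K) * ∑ e ∈ q.divisors, (μ e : ℝ) * ((e:ℝ)⁻¹)^1 := by
      rw [Finset.mul_sum]
      refine Finset.sum_congr rfl fun e he => ?_
      rw [pow_one]
      ring
    rw [h1, hFqsum, hM]
    calc (6/π^2) * phi1 (ℓ*q) * X = (Fl * Fq * K) * X := by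
          have h3 : (6/π^2) * phi1 (ℓ*q) = Fl * Fq * K := by
            rw [main_id ℓ q hℓ0 hq0 hcop, ← hK, ← hFl, ← hFq]
          rw [h3]
    _ = Fl * (X * K * Fq) := by ring
  -- the difference
  have hdiff : S - M = Fl * ∑ e ∈ q.divisors, (μ e : ℝ) *
      ((∑ d ∈ Finset.Icc 1 N, g₁ d * ((N / (d*e) : ℕ) : ℝ)) - (X/(e:ℝ)) * K) := by
    rw [hSid, hMid, ← mul_sub, ← Finset.sum_sub_distrib]
    congr 1
    refine Finset.sum_congr rfl fun e he => ?_
    ring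
  rw [hdiff]
  have hFl_bounds := F_bounds ℓ
  calc |Fl * ∑ e ∈ q.divisors, (μ e : ℝ) *
      ((∑ d ∈ Finset.Icc 1 N, g₁ d * ((N / (d*e) : ℕ) : ℝ)) - (X/(e:ℝ)) * K)|
      = |Fl| * |∑ e ∈ q.divisors, (μ e : ℝ) *
        ((∑ d ∈ Finset.Icc 1 N, g₁ d * ((N / (d*e) : ℕ) : ℝ)) - (X/(e:ℝ)) * K)| := abs_mul _ _
    _ ≤ 1 * |∑ e ∈ q.divisors, (μ e : ℝ) *
        ((∑ d ∈ Finset.Icc 1 N, g₁ d * ((N / (d*e) : ℕ) : ℝ)) - (X/(e:ℝ)) * K)| := by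
        apply mul_le_mul_of_nonneg_right ?_ (abs_nonneg _)
        rw [abs_of_nonneg hFl_bounds.1]
        exact hFl_bounds.2
    _ = |∑ e ∈ q.divisors, (μ e : ℝ) *
        ((∑ d ∈ Finset.Icc 1 N, g₁ d * ((N / (d*e) : ℕ) : ℝ)) - (X/(e:ℝ)) * K)| := one_mul _
    _ ≤ ∑ e ∈ q.divisors, |(μ e : ℝ) *
        ((∑ d ∈ Finset.Icc 1 N, g₁ d * ((N / (d*e) : ℕ) : ℝ)) - (X/(e:ℝ)) * K)| :=
        Finset.abs_sum_le_sum_abs _ _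
    _ ≤ ∑ e ∈ q.divisors, (6 + 2/δ) * X^δ * ((e:ℝ)^(-δ)) := by
        apply Finset.sum_le_sum
        intro e he
        have he1 : 1 ≤ e := Nat.pos_of_mem_divisors he
        have hepos : (0:ℝ) < (e:ℝ) := by exact_mod_cast he1
        rw [abs_mul]
        have hμe : |(μ e : ℝ)| ≤ 1 := by
          have := ArithmeticFunction.abs_moebius_le_one (n := e)
          calc |(μ e : ℝ)| = ((|μ e| : ℤ) : ℝ) := by push_cast; rfl
          _ ≤ 1 := by exact_mod_cast this
        have hper := per_e δ X hδ hδ1 hX (ℓ*q) e hL he1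
        have hrw : (X/(e:ℝ))^δ = X^δ * (e:ℝ)^(-δ) := by
          rw [Real.div_rpow hXpos.le (le_of_lt hepos), Real.rpow_neg (le_of_lt hepos)]
          rw [div_eq_mul_inv]
        calc |(μ e : ℝ)| * |(∑ d ∈ Finset.Icc 1 N, g₁ d * ((N / (d*e) : ℕ) : ℝ)) - (X/(e:ℝ)) * K|
            ≤ 1 * ((6 + 2/δ) * (X/(e:ℝ))^δ) := by
              apply mul_le_mul hμe ?_ (abs_nonneg _) zero_le_one
              exact hper
        _ = (6 + 2/δ) * (X/(e:ℝ))^δ := one_mul _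
        _ = (6 + 2/δ) * X^δ * ((e:ℝ)^(-δ)) := by rw [hrw]; ring
    _ = (6 + 2/δ) * X^δ * ∑ e ∈ q.divisors, ((e:ℝ)^(-δ)) := by rw [← Finset.mul_sum]
    _ = (6 + 2/δ) * (∑ d ∈ q.divisors, (d:ℝ)^(-δ)) * X^δ := by ring
end

section
/- Let d ≥ 1 be a square-free integer and (x₀, y, z₀) ∈ ℤ × ℤ_{≥1} × ℤ_{≥1} with gcd(x₀, y, z₀) = 1 and d·y²·z₀ = x₀³ + A·x₀·z₀² + B·z₀³. Then there exists a unique quadruple (d₀, d₁, z, x) ∈ ℤ_{≥1}³ × ℤ such that d = d₀d₁, x₀ = d₁xz, z₀ = d₁²z³, gcd(xy, d₁z) = 1, and d₀y² = x³ + A·x·(d₁z²)² + B·(d₁z²)³. -/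
private lemma int_pow_dvd_iff {p : ℕ} (hp : p.Prime) {t : ℤ} (ht : t ≠ 0) (k : ℕ) :
    (p : ℤ) ^ k ∣ t ↔ k ≤ t.natAbs.factorization p := by
  rw [show ((p:ℤ)^k) = ((p^k : ℕ) : ℤ) by push_cast; ring, Int.natCast_dvd,
    hp.pow_dvd_iff_le_factorization (Int.natAbs_ne_zero.mpr ht)]

private lemma exists_cube {N : ℕ} (hN : N ≠ 0) (h : ∀ p, 3 ∣ N.factorization p) :
    ∃ m : ℕ, N = m ^ 3 := by
  refine ⟨N.factorization.prod fun p k => p ^ (k / 3), ?_⟩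
  have : ((N.factorization.prod fun p k => p ^ (k / 3)) ^ 3 : ℕ)
      = N.factorization.prod fun p k => p ^ k := by
    rw [Finsupp.prod, Finsupp.prod, ← Finset.prod_pow]
    exact Finset.prod_congr rfl fun p hp => by
      rw [← pow_mul, Nat.div_mul_cancel (h p)]
  rw [this, Nat.factorization_prod_pow_eq_self hN]

private lemma dvd_x₀_of_dvd_z₀ (A B : ℤ) (d : ℕ) (x₀ y z₀ : ℤ)
    (heq : (d : ℤ) * y ^ 2 * z₀ = x₀ ^ 3 + A * x₀ * z₀ ^ 2 + B * z₀ ^ 3)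
    {q : ℕ} (hq : q.Prime) (hqz : (q:ℤ) ∣ z₀) : (q:ℤ) ∣ x₀ := by
  have hPI : Prime (q:ℤ) := Nat.prime_iff_prime_int.mp hq
  have h3 : (q:ℤ) ∣ x₀ ^ 3 := by
    have h1 : (q:ℤ) ∣ (d:ℤ) * y ^ 2 * z₀ := Dvd.dvd.mul_left hqz _
    have h2 : (q:ℤ) ∣ A * x₀ * z₀ ^ 2 + B * z₀ ^ 3 :=
      dvd_add (Dvd.dvd.mul_left (hqz.trans (dvd_pow_self z₀ two_ne_zero)) _)
        (Dvd.dvd.mul_left (hqz.trans (dvd_pow_self z₀ three_ne_zero)) _)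
    have hx3 : x₀ ^ 3 = (d:ℤ) * y ^ 2 * z₀ - (A * x₀ * z₀ ^ 2 + B * z₀ ^ 3) := by
      linarith [heq]
    rw [hx3]; exact dvd_sub h1 h2
  exact hPI.dvd_of_dvd_pow h3

private lemma key_val (A B : ℤ) (d : ℕ) (hd : Squarefree d)
    (x₀ y z₀ : ℤ) (hy0 : y ≠ 0) (hz0 : z₀ ≠ 0) (hx0 : x₀ ≠ 0)
    (hpy : ∀ q : ℕ, q.Prime → (q:ℤ) ∣ z₀ → ¬ (q:ℤ) ∣ y)
    (heq : (d : ℤ) * y ^ 2 * z₀ = x₀ ^ 3 + A * x₀ * z₀ ^ 2 + B * z₀ ^ 3)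
    {p : ℕ} (hp : p.Prime) (hpz : p ∣ z₀.natAbs) :
    1 ≤ x₀.natAbs.factorization p ∧
      z₀.natAbs.factorization p + d.factorization p = 3 * x₀.natAbs.factorization p := by
  set a := z₀.natAbs.factorization p with ha_def
  set b := x₀.natAbs.factorization p with hb_def
  set e := d.factorization p with he_def
  have hd0 : d ≠ 0 := hd.ne_zero
  have hpzI : (p:ℤ) ∣ z₀ := Int.natCast_dvd.mpr hpz
  have hpx : (p:ℤ) ∣ x₀ := dvd_x₀_of_dvd_z₀ A B d x₀ y z₀ heq hp hpzI
  have hb1 : 1 ≤ b := (hp.dvd_iff_one_le_factorization (Int.natAbs_ne_zero.mpr hx0)).mp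
    (Int.natCast_dvd.mp hpx)
  have ha1 : 1 ≤ a := (hp.dvd_iff_one_le_factorization (Int.natAbs_ne_zero.mpr hz0)).mp hpz
  have he1 : e ≤ 1 := hd.natFactorization_le_one p
  have hyv : y.natAbs.factorization p = 0 :=
    Nat.factorization_eq_zero_of_not_dvd
      (fun hdy => hpy p hp hpzI (Int.natCast_dvd.mpr hdy))
  have hL0 : (d:ℤ) * y ^ 2 * z₀ ≠ 0 :=
    mul_ne_zero (mul_ne_zero (Int.natCast_ne_zero.mpr hd0) (pow_ne_zero 2 hy0)) hz0
  have hLval : ((d:ℤ) * y ^ 2 * z₀).natAbs.factorization p = e + a := by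
    rw [Int.natAbs_mul, Int.natAbs_mul, Int.natAbs_pow, Int.natAbs_natCast,
      Nat.factorization_mul (mul_ne_zero hd0 (pow_ne_zero 2 (Int.natAbs_ne_zero.mpr hy0)))
        (Int.natAbs_ne_zero.mpr hz0),
      Nat.factorization_mul hd0 (pow_ne_zero 2 (Int.natAbs_ne_zero.mpr hy0)),
      Nat.factorization_pow]
    simp [hyv, ← ha_def, ← he_def]
  have hLdvd : ∀ k : ℕ, (p:ℤ) ^ k ∣ (d:ℤ) * y ^ 2 * z₀ ↔ k ≤ e + a := by
    intro k; rw [int_pow_dvd_iff hp hL0, hLval]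
  have hx3v : ∀ k : ℕ, (p:ℤ) ^ k ∣ x₀ ^ 3 ↔ k ≤ 3 * b := by
    intro k
    rw [int_pow_dvd_iff hp (pow_ne_zero 3 hx0), Int.natAbs_pow, Nat.factorization_pow]
    simp [← hb_def, mul_comm]
  have hxd : ∀ k : ℕ, k ≤ b → (p:ℤ) ^ k ∣ x₀ := fun k hk =>
    (int_pow_dvd_iff hp hx0 k).mpr hk
  have hzd : ∀ k : ℕ, k ≤ a → (p:ℤ) ^ k ∣ z₀ := fun k hk =>
    (int_pow_dvd_iff hp hz0 k).mpr hk
  have t2 : ∀ k : ℕ, k ≤ b + 2 * a → (p:ℤ) ^ k ∣ A * x₀ * z₀ ^ 2 := by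
    intro k hk
    have h : (p:ℤ) ^ (b + 2 * a) ∣ x₀ * z₀ ^ 2 := by
      rw [pow_add, mul_comm 2 a, pow_mul]
      exact mul_dvd_mul (hxd b le_rfl) (pow_dvd_pow_of_dvd (hzd a le_rfl) 2)
    rw [mul_assoc]
    exact (pow_dvd_pow _ hk).trans (h.mul_left A)
  have t3 : ∀ k : ℕ, k ≤ 3 * a → (p:ℤ) ^ k ∣ B * z₀ ^ 3 := by
    intro k hk
    have h : (p:ℤ) ^ (3 * a) ∣ z₀ ^ 3 := by
      rw [mul_comm 3 a, pow_mul]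
      exact pow_dvd_pow_of_dvd (hzd a le_rfl) 3
    exact (pow_dvd_pow _ hk).trans (h.mul_left B)
  have t1 : ∀ k : ℕ, k ≤ 3 * b → (p:ℤ) ^ k ∣ x₀ ^ 3 := fun k hk => (hx3v k).mpr hk
  have hba : b < a := by
    by_contra hc
    push_neg at hc
    have hk : (p:ℤ) ^ (e + a + 1) ∣ x₀ ^ 3 + A * x₀ * z₀ ^ 2 + B * z₀ ^ 3 :=
      dvd_add (dvd_add (t1 _ (by omega)) (t2 _ (by omega))) (t3 _ (by omega))
    rw [← heq] at hk
    exact absurd ((hLdvd _).mp hk) (by omega)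
  have h2 : e + a ≤ 3 * b := by
    have hx3 : (p:ℤ) ^ (min (e + a) (3 * b + 2)) ∣ x₀ ^ 3 := by
      have hx3eq : x₀ ^ 3 = (d:ℤ) * y ^ 2 * z₀ - A * x₀ * z₀ ^ 2 - B * z₀ ^ 3 := by
        linarith [heq]
      rw [hx3eq]
      exact dvd_sub (dvd_sub ((hLdvd _).mpr (min_le_left _ _))
        (t2 _ (by omega))) (t3 _ (by omega))
    have := (hx3v _).mp hx3
    omega
  have h3 : 3 * b ≤ e + a := by
    by_contra hc
    push_neg at hc
    have hk : (p:ℤ) ^ (e + a + 1) ∣ x₀ ^ 3 + A * x₀ * z₀ ^ 2 + B * z₀ ^ 3 :=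
      dvd_add (dvd_add (t1 _ (by omega)) (t2 _ (by omega))) (t3 _ (by omega))
    rw [← heq] at hk
    exact absurd ((hLdvd _).mp hk) (by omega)
  exact ⟨hb1, by omega⟩

/-- Coordinates of rational points on quadratic twists: every primitive integer solution
`(x₀, y, z₀)` of `d y² z₀ = x₀³ + A x₀ z₀² + B z₀³` with `d` square-free decomposes uniquely as
`d = d₀d₁`, `x₀ = d₁ x z`, `z₀ = d₁² z³` with `gcd(xy, d₁z) = 1` and
`d₀ y² = x³ + A x (d₁z²)² + B (d₁z²)³`.  The tuple is `T = (d₀, d₁, z, x)`. -/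
theorem twist_point_coordinates (A B : ℤ) (hΔ : -(4 * A ^ 3 + 27 * B ^ 2) ≠ 0)
    (d : ℕ) (hd : Squarefree d) (hd1 : 1 ≤ d)
    (x₀ y z₀ : ℤ) (hy : 1 ≤ y) (hz₀ : 1 ≤ z₀)
    (hprim : Int.gcd x₀ (Int.gcd y z₀) = 1)
    (heq : (d : ℤ) * y ^ 2 * z₀ = x₀ ^ 3 + A * x₀ * z₀ ^ 2 + B * z₀ ^ 3) :
    ∃! T : ℤ × ℤ × ℤ × ℤ,
      1 ≤ T.1 ∧ 1 ≤ T.2.1 ∧ 1 ≤ T.2.2.1 ∧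
      (d : ℤ) = T.1 * T.2.1 ∧
      x₀ = T.2.1 * T.2.2.2 * T.2.2.1 ∧
      z₀ = T.2.1 ^ 2 * T.2.2.1 ^ 3 ∧
      Int.gcd (T.2.2.2 * y) (T.2.1 * T.2.2.1) = 1 ∧
      T.1 * y ^ 2 = T.2.2.2 ^ 3 + A * T.2.2.2 * (T.2.1 * T.2.2.1 ^ 2) ^ 2
        + B * (T.2.1 * T.2.2.1 ^ 2) ^ 3 := by
  have hd0 : d ≠ 0 := hd.ne_zero
  have hy0 : y ≠ 0 := by positivity
  have hz0 : z₀ ≠ 0 := by positivity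
  -- no prime divides both y and z₀
  have hpy : ∀ q : ℕ, q.Prime → (q:ℤ) ∣ z₀ → ¬ (q:ℤ) ∣ y := by
    intro q hq hqz hqy
    have hqx : (q:ℤ) ∣ x₀ := dvd_x₀_of_dvd_z₀ A B d x₀ y z₀ heq hq hqz
    have hg : (q:ℤ) ∣ (Int.gcd x₀ (Int.gcd y z₀) : ℤ) :=
      Int.dvd_coe_gcd hqx (Int.dvd_coe_gcd hqy hqz)
    rw [hprim] at hg
    have := Int.le_of_dvd one_pos hg
    have := hq.two_le
    omega
  -- if x₀ = 0 then z₀ = 1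
  have hxz : x₀ = 0 → z₀ = 1 := by
    intro h0
    rw [h0] at heq
    have h1 : (d:ℤ) * y ^ 2 = B * z₀ ^ 2 := by
      have := mul_right_cancel₀ hz0 (show ((d:ℤ) * y ^ 2) * z₀ = (B * z₀ ^ 2) * z₀ by
        linear_combination heq)
      exact this
    have hcop : IsCoprime (z₀ ^ 2) (y ^ 2) := by
      have : Int.gcd y z₀ = 1 := by simpa [h0] using hprim
      have : IsCoprime z₀ y := Int.isCoprime_iff_gcd_eq_one.mpr (by
        rw [Int.gcd_comm]; exact this)
      exact this.pow
    have hdvd : z₀ ^ 2 ∣ (d:ℤ) * y ^ 2 := ⟨B, by linear_combination h1⟩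
    have hzd : z₀ ^ 2 ∣ (d:ℤ) := hcop.dvd_of_dvd_mul_right hdvd
    have hzn : z₀.natAbs * z₀.natAbs ∣ d := by
      have h' : (z₀ ^ 2).natAbs ∣ d := by
        rw [← Int.natAbs_natCast d]
        exact Int.natAbs_dvd_natAbs.mpr hzd
      rwa [pow_two, Int.natAbs_mul] at h'
    have := hd z₀.natAbs hzn
    have hone : z₀.natAbs = 1 := Nat.isUnit_iff.mp this
    omega
  -- set up notation
  set n := z₀.natAbs with hn_def
  have hnz : (n:ℤ) = z₀ := Int.natAbs_of_nonneg (by omega)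
  have hn0 : n ≠ 0 := Int.natAbs_ne_zero.mpr hz0
  set d₁ := Nat.gcd d n with hd₁_def
  have hd₁0 : d₁ ≠ 0 := fun h => hd0 (Nat.eq_zero_of_gcd_eq_zero_left h)
  have hx0' : ∀ p : ℕ, p.Prime → p ∣ n → x₀ ≠ 0 := by
    intro p hp hpn h0
    have hz1 : z₀ = 1 := hxz h0
    have hn1 : n = 1 := by rw [hn_def, hz1]; rfl
    rw [hn1, Nat.dvd_one] at hpn
    exact hp.ne_one hpn
  have key : ∀ p : ℕ, p.Prime → p ∣ n →
      1 ≤ x₀.natAbs.factorization p ∧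
        n.factorization p + d.factorization p = 3 * x₀.natAbs.factorization p := by
    intro p hp hpn
    exact key_val A B d hd x₀ y z₀ hy0 hz0 (hx0' p hp hpn) hpy heq hp hpn
  have hval : ∀ p : ℕ, d₁.factorization p = min (d.factorization p) (n.factorization p) := by
    intro p
    rw [hd₁_def, Nat.factorization_gcd hd0 hn0, Finsupp.inf_apply]
  have he1 : ∀ p, d.factorization p ≤ 1 := hd.natFactorization_le_one
  -- d₁ ^ 2 divides n
  have hd₁sq : d₁ ^ 2 ∣ n := by
    rw [← Nat.factorization_le_iff_dvd (pow_ne_zero 2 hd₁0) hn0, Finsupp.le_def]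
    intro p
    rw [Nat.factorization_pow, Finsupp.smul_apply, smul_eq_mul]
    by_cases hp : p.Prime
    · by_cases hpn : p ∣ n
      · obtain ⟨hb1, habe⟩ := key p hp hpn
        have ha1 : 1 ≤ n.factorization p := (hp.dvd_iff_one_le_factorization hn0).mp hpn
        have := he1 p
        have := hval p
        omega
      · rw [Nat.factorization_eq_zero_of_not_dvd hpn, hval p,
          Nat.factorization_eq_zero_of_not_dvd hpn]
        simp
    · rw [Nat.factorization_eq_zero_of_not_prime _ hp, Nat.factorization_eq_zero_of_not_prime _ hp]
  set N := n / d₁ ^ 2 with hN_def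
  have hN : n = d₁ ^ 2 * N := (Nat.mul_div_cancel' hd₁sq).symm
  have hN0 : N ≠ 0 := by intro h; rw [h, Nat.mul_zero] at hN; exact hn0 hN
  have hNfact : ∀ p, N.factorization p = n.factorization p - 2 * d₁.factorization p := by
    intro p
    rw [hN_def, Nat.factorization_div hd₁sq, Finsupp.tsub_apply, Nat.factorization_pow,
      Finsupp.smul_apply, smul_eq_mul]
  have hcube : ∀ p, 3 ∣ N.factorization p := by
    intro p
    by_cases hp : p.Prime
    · by_cases hpn : p ∣ n
      · obtain ⟨hb1, habe⟩ := key p hp hpn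
        have ha1 : 1 ≤ n.factorization p := (hp.dvd_iff_one_le_factorization hn0).mp hpn
        have := he1 p
        have := hval p
        have := hNfact p
        omega
      · have := hNfact p
        rw [Nat.factorization_eq_zero_of_not_dvd hpn] at this
        omega
    · rw [Nat.factorization_eq_zero_of_not_prime _ hp]
      exact dvd_zero 3
  obtain ⟨m, hm⟩ := exists_cube hN0 hcube
  have hm0 : m ≠ 0 := by rintro rfl; simp at hm; exact hN0 hm
  have hmfact : ∀ p, 3 * m.factorization p = N.factorization p := by
    intro p
    rw [hm, Nat.factorization_pow, Finsupp.smul_apply, smul_eq_mul]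
  have hmdvdn : m ∣ n := by
    have hNdvd : N ∣ n := ⟨d₁ ^ 2, by rw [hN]; ring⟩
    exact (dvd_pow_self m three_ne_zero).trans (hm ▸ hNdvd)
  have hzeq : z₀ = (d₁:ℤ) ^ 2 * (m:ℤ) ^ 3 := by
    rw [← hnz, hN, hm]; push_cast; ring
  have hdm0 : d₁ * m ≠ 0 := mul_ne_zero hd₁0 hm0
  have hvaldm : ∀ p : ℕ, p.Prime → p ∣ n →
      (d₁ * m).factorization p = x₀.natAbs.factorization p := by
    intro p hp hpn
    obtain ⟨hb1, habe⟩ := key p hp hpn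
    have ha1 : 1 ≤ n.factorization p := (hp.dvd_iff_one_le_factorization hn0).mp hpn
    rw [Nat.factorization_mul hd₁0 hm0, Finsupp.add_apply]
    have h1 := hval p
    have h2 := hmfact p
    have h3 := hNfact p
    have h4 := he1 p
    omega
  have hxdvd : (↑(d₁ * m) : ℤ) ∣ x₀ := by
    by_cases hx0 : x₀ = 0
    · simp [hx0]
    · rw [Int.natCast_dvd]
      rw [← Nat.factorization_le_iff_dvd hdm0 (Int.natAbs_ne_zero.mpr hx0), Finsupp.le_def]
      intro p
      by_cases hp : p.Prime
      · by_cases hpn : p ∣ n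
        · exact le_of_eq (hvaldm p hp hpn)
        · rw [Nat.factorization_mul hd₁0 hm0, Finsupp.add_apply,
            Nat.factorization_eq_zero_of_not_dvd (fun h => hpn (h.trans (Nat.gcd_dvd_right d n))),
            Nat.factorization_eq_zero_of_not_dvd (fun h => hpn (h.trans hmdvdn))]
          simp
      · rw [Nat.factorization_eq_zero_of_not_prime _ hp]
        simp
  obtain ⟨x, hx⟩ := hxdvd
  have hxeq : x₀ = (d₁:ℤ) * x * (m:ℤ) := by rw [hx]; push_cast; ring
  set d₀ := d / d₁ with hd₀_def
  have hd₀ : d₀ * d₁ = d := Nat.div_mul_cancel (Nat.gcd_dvd_left d n)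
  have hd₀0 : d₀ ≠ 0 := by rintro h; rw [h, Nat.zero_mul] at hd₀; exact hd0 hd₀.symm
  have hdd : (d:ℤ) = (d₀:ℤ) * (d₁:ℤ) := by exact_mod_cast (congrArg (Nat.cast : ℕ → ℤ) hd₀).symm
  -- the twisted equation for the new variables
  have hceq : (d₀:ℤ) * y ^ 2 = x ^ 3 + A * x * ((d₁:ℤ) * (m:ℤ) ^ 2) ^ 2
      + B * ((d₁:ℤ) * (m:ℤ) ^ 2) ^ 3 := by
    have hc : ((d₁:ℤ) ^ 3 * (m:ℤ) ^ 3) ≠ 0 := by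
      apply mul_ne_zero <;> [skip; skip] <;>
        exact pow_ne_zero _ (Int.natCast_ne_zero.mpr (by assumption))
    apply mul_left_cancel₀ hc
    rw [hxeq, hzeq, hdd] at heq
    linear_combination heq
  -- gcd condition
  have hgcd : Int.gcd (x * y) ((d₁:ℤ) * (m:ℤ)) = 1 := by
    have habs : ((d₁:ℤ) * (m:ℤ)).natAbs = d₁ * m := by
      rw [Int.natAbs_mul, Int.natAbs_natCast, Int.natAbs_natCast]
    rw [Int.gcd, habs]
    by_contra h
    obtain ⟨p, hp, hp1, hp2⟩ := Nat.Prime.not_coprime_iff_dvd.mp h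
    have hpn : p ∣ n := (hp.dvd_mul.mp hp2).elim
      (fun h' => h'.trans (Nat.gcd_dvd_right d n)) (fun h' => h'.trans hmdvdn)
    have hx0 : x₀ ≠ 0 := hx0' p hp hpn
    have hX0 : x ≠ 0 := by
      rintro rfl; rw [mul_zero] at hx; exact hx0 hx
    have hPI : Prime (p:ℤ) := Nat.prime_iff_prime_int.mp hp
    have hpxy : (p:ℤ) ∣ x * y := Int.natCast_dvd.mpr hp1
    rcases hPI.dvd_mul.mp hpxy with hpX | hpY
    · have h5 : x₀.natAbs = (d₁ * m) * x.natAbs := by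
        rw [hx, Int.natAbs_mul, Int.natAbs_natCast]
      have h6 : x₀.natAbs.factorization p
          = (d₁ * m).factorization p + x.natAbs.factorization p := by
        rw [h5, Nat.factorization_mul hdm0 (Int.natAbs_ne_zero.mpr hX0), Finsupp.add_apply]
      have h7 := hvaldm p hp hpn
      have h8 : 1 ≤ x.natAbs.factorization p :=
        (hp.dvd_iff_one_le_factorization (Int.natAbs_ne_zero.mpr hX0)).mp (Int.natCast_dvd.mp hpX)
      omega
    · exact hpy p hp (Int.natCast_dvd.mpr hpn) hpY
  -- assemble
  refine ⟨((d₀:ℤ), (d₁:ℤ), (m:ℤ), x), ⟨?_, ?_, ?_, ?_, ?_, ?_, ?_, ?_⟩, ?_⟩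
  · show (1:ℤ) ≤ (d₀:ℤ); exact_mod_cast Nat.pos_of_ne_zero hd₀0
  · show (1:ℤ) ≤ (d₁:ℤ); exact_mod_cast Nat.pos_of_ne_zero hd₁0
  · show (1:ℤ) ≤ (m:ℤ); exact_mod_cast Nat.pos_of_ne_zero hm0
  · exact hdd
  · exact hxeq
  · exact hzeq
  · exact hgcd
  · exact hceq
  -- uniqueness
  rintro ⟨D₀, D₁, Z, X⟩ ⟨h1, h2, h3, h4, h5, h6, h7, h8⟩
  simp only at h1 h2 h3 h4 h5 h6 h7 h8 ⊢
  have hD₁0 : D₁ ≠ 0 := by omega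
  have hZ0 : Z ≠ 0 := by omega
  set q := D₁.natAbs with hq_def
  have hq : (q:ℤ) = D₁ := Int.natAbs_of_nonneg (by omega)
  have hq0 : q ≠ 0 := Int.natAbs_ne_zero.mpr hD₁0
  have hqd : q ∣ d := by
    have : (q:ℤ) ∣ (d:ℤ) := by rw [hq, h4]; exact Dvd.intro_left D₀ rfl
    exact_mod_cast this
  have hqsf : Squarefree q := hd.squarefree_of_dvd hqd
  have char : ∀ p : ℕ, p.Prime → (p ∣ q ↔ p ∣ d ∧ p ∣ n) := by
    intro p hp
    constructor
    · intro hpq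
      refine ⟨hpq.trans hqd, ?_⟩
      have hpD₁ : (p:ℤ) ∣ D₁ := by rw [← hq]; exact_mod_cast hpq
      have : (p:ℤ) ∣ z₀ := by
        rw [h6]
        exact Dvd.dvd.mul_right (hpD₁.trans (dvd_pow_self D₁ two_ne_zero)) _
      exact Int.natCast_dvd.mp this
    · rintro ⟨hpd, hpn⟩
      by_contra hpq
      have hPI : Prime (p:ℤ) := Nat.prime_iff_prime_int.mp hp
      have hpD1 : ¬ (p:ℤ) ∣ D₁ := fun h' => hpq (Int.natCast_dvd.mp h')
      have hpD0 : (p:ℤ) ∣ D₀ := by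
        have : (p:ℤ) ∣ D₀ * D₁ := by rw [← h4]; exact_mod_cast hpd
        exact (hPI.dvd_mul.mp this).resolve_right hpD1
      have hpZ : (p:ℤ) ∣ Z := by
        have hpz : (p:ℤ) ∣ D₁ ^ 2 * Z ^ 3 := by rw [← h6]; exact Int.natCast_dvd.mpr hpn
        rcases hPI.dvd_mul.mp hpz with h' | h'
        · exact absurd (hPI.dvd_of_dvd_pow h') hpD1
        · exact hPI.dvd_of_dvd_pow h'
      have hpDZ : (p:ℤ) ∣ D₁ * Z ^ 2 :=
        Dvd.dvd.mul_left (hpZ.trans (dvd_pow_self Z two_ne_zero)) D₁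
      have hpX : (p:ℤ) ∣ X := by
        have hX3 : X ^ 3 = D₀ * y ^ 2 - A * X * (D₁ * Z ^ 2) ^ 2 - B * (D₁ * Z ^ 2) ^ 3 := by
          linarith [h8]
        have : (p:ℤ) ∣ X ^ 3 := by
          rw [hX3]
          exact dvd_sub (dvd_sub (hpD0.mul_right _)
            (Dvd.dvd.mul_left (dvd_pow hpDZ two_ne_zero) _))
            (Dvd.dvd.mul_left (dvd_pow hpDZ three_ne_zero) _)
        exact hPI.dvd_of_dvd_pow this
      have hpg : (p:ℤ) ∣ (Int.gcd (X * y) (D₁ * Z) : ℤ) :=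
        Int.dvd_coe_gcd (hpX.mul_right y) (Dvd.dvd.mul_left hpZ D₁)
      rw [h7] at hpg
      have := Int.le_of_dvd one_pos hpg
      have := hp.two_le
      omega
  have hqd₁ : q = d₁ := by
    have hd₁sf : Squarefree d₁ := hd.squarefree_of_dvd (Nat.gcd_dvd_left d n)
    rw [← Nat.prod_primeFactors_of_squarefree hqsf, ← Nat.prod_primeFactors_of_squarefree hd₁sf]
    congr 1
    ext p
    simp only [Nat.mem_primeFactors]
    constructor
    · rintro ⟨hp, hpq, -⟩
      exact ⟨hp, Nat.dvd_gcd ((char p hp).mp hpq).1 ((char p hp).mp hpq).2, hd₁0⟩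
    · rintro ⟨hp, hpd₁, -⟩
      exact ⟨hp, (char p hp).mpr
        ⟨hpd₁.trans (Nat.gcd_dvd_left d n), hpd₁.trans (Nat.gcd_dvd_right d n)⟩, hq0⟩
  have hD₁ : D₁ = (d₁:ℤ) := by rw [← hq, hqd₁]
  have hZm : Z = (m:ℤ) := by
    have h6' : D₁ ^ 2 * Z ^ 3 = (d₁:ℤ) ^ 2 * (m:ℤ) ^ 3 := h6.symm.trans hzeq
    rw [hD₁] at h6'
    have h3eq : Z ^ 3 = (m:ℤ) ^ 3 :=
      mul_left_cancel₀ (pow_ne_zero 2 (Int.natCast_ne_zero.mpr hd₁0)) h6'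
    exact (Odd.strictMono_pow (R := ℤ) (⟨1, by norm_num⟩ : Odd 3)).injective h3eq
  have hXx : X = x := by
    rw [hD₁, hZm] at h5
    have h5' : (d₁:ℤ) * x * (m:ℤ) = (d₁:ℤ) * X * (m:ℤ) := hxeq.symm.trans h5
    have : ((d₁:ℤ) * (m:ℤ)) * X = ((d₁:ℤ) * (m:ℤ)) * x := by linear_combination - h5'
    exact mul_left_cancel₀ (by exact_mod_cast hdm0) this
  have hD₀ : D₀ = (d₀:ℤ) := by
    rw [hD₁] at h4
    exact mul_right_cancel₀ (Int.natCast_ne_zero.mpr hd₁0) (h4.symm.trans hdd)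
  rw [hD₀, hD₁, hZm, hXx]
end

section
/- Let (m₁, m₂, q) ∈ ℤ³ with gcd(m₁, m₂, q) = 1 and q ≠ 0, and let X₁, X₂ > 0. Then the number of primitive pairs (x₁, x₂) ∈ ℤ² (i.e. gcd(x₁,x₂)=1) with |x₁| ≤ X₁, |x₂| ≤ X₂ and x₁m₁ + x₂m₂ ≡ 0 mod q is O(X₁X₂/|q| + 1), with an absolute implied constant. -/
private lemma cross_zero' (u v : ℤ × ℤ) (hv : Int.gcd v.1 v.2 = 1)
    (h : u.1 * v.2 - u.2 * v.1 = 0) : ∃ k : ℤ, u.1 = k * v.1 ∧ u.2 = k * v.2 := by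
  obtain ⟨a, b, hab⟩ := Int.isCoprime_iff_gcd_eq_one.mpr hv
  exact ⟨a * u.1 + b * u.2, by linear_combination -(u.1 * hab) + b * h,
    by linear_combination -(u.2 * hab) - a * h⟩

private lemma abs_cast_le_iff (n : ℤ) (X : ℝ) : |(n:ℝ)| ≤ X ↔ (-⌊X⌋ ≤ n ∧ n ≤ ⌊X⌋) := by
  rw [abs_le]
  constructor
  · rintro ⟨h1, h2⟩
    refine ⟨?_, Int.le_floor.mpr h2⟩
    have : (-n : ℤ) ≤ ⌊X⌋ := Int.le_floor.mpr (by push_cast; linarith)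
    omega
  · rintro ⟨h1, h2⟩
    have l2 := Int.le_floor.mp h2
    have l1 := Int.le_floor.mp (show (-n) ≤ ⌊X⌋ by omega)
    push_cast at l1 ⊢
    constructor <;> linarith

/-- Heath-Brown's lemma: for `(m₁, m₂, q)` with `gcd(m₁, m₂, q) = 1` and `q ≠ 0`, the number of
primitive pairs `(x₁, x₂)` with `|x₁| ≤ X₁`, `|x₂| ≤ X₂` and `x₁m₁ + x₂m₂ ≡ 0 (mod q)` is
`O(X₁X₂/|q| + 1)` with an absolute implied constant. -/
theorem primitive_pairs_congruence_bound :
    ∃ C : ℝ, 0 < C ∧ ∀ m₁ m₂ q : ℤ, q ≠ 0 → Int.gcd m₁ (Int.gcd m₂ q) = 1 →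
      ∀ X₁ X₂ : ℝ, 0 < X₁ → 0 < X₂ →
      (Nat.card {p : ℤ × ℤ | Int.gcd p.1 p.2 = 1 ∧ |(p.1 : ℝ)| ≤ X₁ ∧ |(p.2 : ℝ)| ≤ X₂ ∧
          q ∣ (p.1 * m₁ + p.2 * m₂)} : ℝ)
        ≤ C * (X₁ * X₂ / |(q : ℝ)| + 1) := by
  classical
  refine ⟨20, by norm_num, ?_⟩
  intro m₁ m₂ q hq hg X₁ X₂ hX₁ hX₂
  have hqpos : (0:ℝ) < |(q:ℝ)| := abs_pos.mpr (Int.cast_ne_zero.mpr hq)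
  set A : ℤ := ⌊X₁⌋ with hA
  set B : ℤ := ⌊X₂⌋ with hB
  set T : Finset (ℤ × ℤ) := (Finset.Icc (-A) A ×ˢ Finset.Icc (-B) B).filter
      (fun p => Int.gcd p.1 p.2 = 1 ∧ q ∣ (p.1 * m₁ + p.2 * m₂)) with hTdef
  have hmemT : ∀ p : ℤ × ℤ, p ∈ T ↔ (Int.gcd p.1 p.2 = 1 ∧ |(p.1:ℝ)| ≤ X₁ ∧ |(p.2:ℝ)| ≤ X₂ ∧
      q ∣ (p.1*m₁+p.2*m₂)) := by
    intro p
    rw [abs_cast_le_iff p.1 X₁, abs_cast_le_iff p.2 X₂, hTdef, Finset.mem_filter,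
      Finset.mem_product, Finset.mem_Icc, Finset.mem_Icc]
    tauto
  have hcardeq : Nat.card {p : ℤ × ℤ | Int.gcd p.1 p.2 = 1 ∧ |(p.1 : ℝ)| ≤ X₁ ∧ |(p.2 : ℝ)| ≤ X₂ ∧
      q ∣ (p.1 * m₁ + p.2 * m₂)} = T.card := by
    rw [Nat.card_coe_set_eq]
    have : {p : ℤ × ℤ | Int.gcd p.1 p.2 = 1 ∧ |(p.1 : ℝ)| ≤ X₁ ∧ |(p.2 : ℝ)| ≤ X₂ ∧
        q ∣ (p.1 * m₁ + p.2 * m₂)} = ↑T := by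
      ext p
      rw [Set.mem_setOf_eq, Finset.mem_coe, hmemT]
    rw [this, Set.ncard_coe_finset]
  rw [hcardeq]
  rcases T.eq_empty_or_nonempty with hTe | ⟨v, hvT⟩
  · rw [hTe]
    simp only [Finset.card_empty, Nat.cast_zero]
    positivity
  obtain ⟨hvg, hv1, hv2, hvd⟩ := (hmemT v).mp hvT
  have hvne : v.1 ≠ 0 ∨ v.2 ≠ 0 := by
    by_contra h
    push_neg at h
    rw [h.1, h.2] at hvg
    simp at hvg
  set N : ℝ := max (|(v.1:ℝ)| / X₁) (|(v.2:ℝ)| / X₂) with hN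
  have hN0 : 0 < N := by
    rcases hvne with h | h
    · exact lt_max_of_lt_left (by positivity)
    · exact lt_max_of_lt_right (by positivity)
  have hN1 : N ≤ 1 := max_le ((div_le_one hX₁).mpr hv1) ((div_le_one hX₂).mpr hv2)
  have hNv1 : |(v.1:ℝ)| ≤ N * X₁ := by
    rw [← div_le_iff₀ hX₁]; exact le_max_left _ _
  have hNv2 : |(v.2:ℝ)| ≤ N * X₂ := by
    rw [← div_le_iff₀ hX₂]; exact le_max_right _ _
  -- Bezout for (m₁, m₂, q)
  obtain ⟨a₀, b₀, c₀, habc⟩ : ∃ a b c : ℤ, a*m₁ + b*m₂ + c*q = 1 := by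
    obtain ⟨a, b, hab⟩ := Int.isCoprime_iff_gcd_eq_one.mpr
      (show Int.gcd m₁ ((Int.gcd m₂ q : ℤ)) = 1 by simpa [Int.gcd] using hg)
    refine ⟨a, b * Int.gcdA m₂ q, b * Int.gcdB m₂ q, ?_⟩
    have h2 := Int.gcd_eq_gcd_ab m₂ q
    linear_combination hab - b * h2
  have hcross : ∀ u ∈ T, q ∣ (u.1 * v.2 - u.2 * v.1) := by
    intro u hu
    obtain ⟨_, _, _, hud⟩ := (hmemT u).mp hu
    obtain ⟨cu, hcu⟩ := hud
    obtain ⟨cv, hcv⟩ := hvd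
    refine ⟨(v.2*cu - u.2*cv)*a₀ + (u.1*cv - v.1*cu)*b₀ + (u.1*v.2 - u.2*v.1)*c₀, ?_⟩
    linear_combination (-(u.1*v.2 - u.2*v.1))*habc + (a₀*v.2 - b₀*v.1)*hcu +
      (b₀*u.1 - a₀*u.2)*hcv
  set K : ℤ := ⌊2/N⌋ with hK
  set J : ℤ := ⌊2*N*X₁*X₂/|(q:ℝ)|⌋ with hJ
  have hK0 : 0 ≤ K := Int.le_floor.mpr (by exact_mod_cast div_nonneg (by norm_num) hN0.le)
  have h2N : (0:ℝ) < 2*N*X₁*X₂ := by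
    have := mul_pos (mul_pos (mul_pos (show (0:ℝ) < 2 by norm_num) hN0) hX₁) hX₂
    linarith
  have hJ0 : 0 ≤ J := Int.le_floor.mpr (by exact_mod_cast div_nonneg h2N.le hqpos.le)
  have hKle : (K:ℝ) ≤ 2/N := Int.floor_le _
  have hJle : (J:ℝ) ≤ 2*N*X₁*X₂/|(q:ℝ)| := Int.floor_le _
  set d : ℤ × ℤ → ℤ := fun u => u.1*v.2 - u.2*v.1 with hd
  set D : Finset ℤ := T.image d with hD
  have hsum : T.card = ∑ e ∈ D, (T.filter fun u => d u = e).card :=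
    Finset.card_eq_sum_card_image d T
  -- fiber over 0 has at most 2 elements
  have hf0 : (T.filter fun u => d u = 0).card ≤ 2 := by
    have hsub : T.filter (fun u => d u = 0) ⊆ {v, -v} := by
      intro u hu
      rw [Finset.mem_filter] at hu
      obtain ⟨hug, _, _, _⟩ := (hmemT u).mp hu.1
      obtain ⟨k, hk1, hk2⟩ := cross_zero' u v hvg hu.2
      have hkabs : k.natAbs = 1 := by
        have h1 : Int.gcd (k*v.1) (k*v.2) = 1 := by rw [← hk1, ← hk2]; exact hug
        rwa [Int.gcd_mul_left, hvg, mul_one] at h1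
      rcases Int.natAbs_eq_iff.mp hkabs with h | h
      · simp only [Finset.mem_insert, Finset.mem_singleton]
        left
        exact Prod.ext_iff.mpr ⟨by rw [hk1, h]; simp, by rw [hk2, h]; simp⟩
      · simp only [Finset.mem_insert, Finset.mem_singleton]
        right
        exact Prod.ext_iff.mpr ⟨by rw [hk1, h]; simp, by rw [hk2, h]; simp⟩
    calc (T.filter fun u => d u = 0).card ≤ ({v, -v} : Finset (ℤ × ℤ)).card :=
          Finset.card_le_card hsub
      _ ≤ 2 := Finset.card_insert_le _ _ |>.trans (by simp)
  -- each nonzero fiber has at most 2K+1 elements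
  have hfib : ∀ e ∈ D, (T.filter fun u => d u = e).card ≤ (2*K+1).toNat := by
    intro e heD
    obtain ⟨u₀, hu₀T, hu₀e⟩ := Finset.mem_image.mp heD
    obtain ⟨_, hu₀1, hu₀2, _⟩ := (hmemT u₀).mp hu₀T
    obtain ⟨a, b, hab⟩ := Int.isCoprime_iff_gcd_eq_one.mpr hvg
    have hcard : (T.filter fun u => d u = e).card ≤ (Finset.Icc (-K) K).card := by
      apply Finset.card_le_card_of_injOn (fun u => a*(u.1 - u₀.1) + b*(u.2 - u₀.2))
      · intro u hu
        rw [Finset.mem_coe, Finset.mem_filter] at hu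
        obtain ⟨_, hub1, hub2, _⟩ := (hmemT u).mp hu.1
        have hc : (u.1-u₀.1)*v.2 - (u.2-u₀.2)*v.1 = 0 := by
          have h1 : u.1*v.2 - u.2*v.1 = e := hu.2
          have h2 : u₀.1*v.2 - u₀.2*v.1 = e := hu₀e
          ring_nf
          ring_nf at h1 h2
          linarith
        obtain ⟨k, hk1, hk2⟩ := cross_zero' (u.1-u₀.1, u.2-u₀.2) v hvg hc
        simp only at hk1 hk2
        have hkval : a*(u.1 - u₀.1) + b*(u.2 - u₀.2) = k := by
          rw [hk1, hk2]; linear_combination k * hab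
        beta_reduce
        rw [hkval, Finset.mem_coe, Finset.mem_Icc]
        have hbk1 : |(k:ℝ)| * |(v.1:ℝ)| ≤ 2*X₁ := by
          have h0 : (k:ℝ) * (v.1:ℝ) = (u.1:ℝ) - (u₀.1:ℝ) := by exact_mod_cast hk1.symm
          rw [← abs_mul, h0]
          calc |(u.1:ℝ) - (u₀.1:ℝ)| ≤ |(u.1:ℝ)| + |(u₀.1:ℝ)| := abs_sub _ _
            _ ≤ 2*X₁ := by linarith
        have hbk2 : |(k:ℝ)| * |(v.2:ℝ)| ≤ 2*X₂ := by
          have h0 : (k:ℝ) * (v.2:ℝ) = (u.2:ℝ) - (u₀.2:ℝ) := by exact_mod_cast hk2.symm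
          rw [← abs_mul, h0]
          calc |(u.2:ℝ) - (u₀.2:ℝ)| ≤ |(u.2:ℝ)| + |(u₀.2:ℝ)| := abs_sub _ _
            _ ≤ 2*X₂ := by linarith
        have hbkN : |(k:ℝ)| * N ≤ 2 := by
          rw [hN, mul_max_of_nonneg _ _ (abs_nonneg (k:ℝ))]
          apply max_le
          · rw [mul_div_assoc', div_le_iff₀ hX₁]
            linarith [hbk1]
          · rw [mul_div_assoc', div_le_iff₀ hX₂]
            linarith [hbk2]
        have hkK : |(k:ℝ)| ≤ 2/N := by
          rw [le_div_iff₀ hN0]; exact hbkN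
        have h1 : k ≤ K := Int.le_floor.mpr (le_trans (le_abs_self _) hkK)
        have h2 : -K ≤ k := by
          have : (-k : ℤ) ≤ K := Int.le_floor.mpr (by
            push_cast
            exact le_trans (neg_le_abs _) hkK)
          omega
        exact ⟨h2, h1⟩
      · intro u hu u' hu' heq
        rw [Finset.mem_coe, Finset.mem_filter] at hu hu'
        have hc : (u.1-u₀.1)*v.2 - (u.2-u₀.2)*v.1 = 0 := by
          have h1 : u.1*v.2 - u.2*v.1 = e := hu.2
          have h2 : u₀.1*v.2 - u₀.2*v.1 = e := hu₀e
          ring_nf; ring_nf at h1 h2; linarith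
        have hc' : (u'.1-u₀.1)*v.2 - (u'.2-u₀.2)*v.1 = 0 := by
          have h1 : u'.1*v.2 - u'.2*v.1 = e := hu'.2
          have h2 : u₀.1*v.2 - u₀.2*v.1 = e := hu₀e
          ring_nf; ring_nf at h1 h2; linarith
        obtain ⟨k, hk1, hk2⟩ := cross_zero' (u.1-u₀.1, u.2-u₀.2) v hvg hc
        obtain ⟨k', hk1', hk2'⟩ := cross_zero' (u'.1-u₀.1, u'.2-u₀.2) v hvg hc'
        simp only at hk1 hk2 hk1' hk2'
        have hkval : a*(u.1 - u₀.1) + b*(u.2 - u₀.2) = k := by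
          rw [hk1, hk2]; linear_combination k * hab
        have hkval' : a*(u'.1 - u₀.1) + b*(u'.2 - u₀.2) = k' := by
          rw [hk1', hk2']; linear_combination k' * hab
        have hkk : k = k' := by rw [← hkval, ← hkval']; exact heq
        apply Prod.ext_iff.mpr
        constructor
        · have := hk1'; rw [← hkk] at this; omega
        · have := hk2'; rw [← hkk] at this; omega
    rwa [Int.card_Icc, show K + 1 - -K = 2*K+1 by ring] at hcard
  -- the number of nonzero fibers
  have hDcard : ((D.erase 0).card : ℝ) ≤ 2*(J:ℝ) := by
    have h1 : (D.erase 0).card ≤ ((Finset.Icc (-J) J).erase 0).card := by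
      apply Finset.card_le_card_of_injOn (fun e => e / q)
      · intro e he
        rw [Finset.mem_coe, Finset.mem_erase] at he
        obtain ⟨hene, heD⟩ := he
        obtain ⟨u, huT, hue⟩ := Finset.mem_image.mp heD
        have hqe : q ∣ e := hue ▸ hcross u huT
        obtain ⟨_, hub1, hub2, _⟩ := (hmemT u).mp huT
        have hce : |(e:ℝ)| ≤ 2*N*X₁*X₂ := by
          have hde : ((e:ℤ):ℝ) = (u.1:ℝ)*(v.2:ℝ) - (u.2:ℝ)*(v.1:ℝ) := by
            rw [← hue]; simp only [hd]; push_cast; ring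
          rw [hde]
          have habs : |(u.1:ℝ)*(v.2:ℝ) - (u.2:ℝ)*(v.1:ℝ)| ≤
              |(u.1:ℝ)| * |(v.2:ℝ)| + |(u.2:ℝ)| * |(v.1:ℝ)| := by
            calc |(u.1:ℝ)*(v.2:ℝ) - (u.2:ℝ)*(v.1:ℝ)|
                ≤ |(u.1:ℝ)*(v.2:ℝ)| + |(u.2:ℝ)*(v.1:ℝ)| := abs_sub _ _
              _ = |(u.1:ℝ)| * |(v.2:ℝ)| + |(u.2:ℝ)| * |(v.1:ℝ)| := by rw [abs_mul, abs_mul]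
          refine le_trans habs ?_
          have t1 : |(u.1:ℝ)| * |(v.2:ℝ)| ≤ X₁ * (N * X₂) :=
            mul_le_mul hub1 hNv2 (abs_nonneg _) (le_of_lt hX₁)
          have t2 : |(u.2:ℝ)| * |(v.1:ℝ)| ≤ X₂ * (N * X₁) :=
            mul_le_mul hub2 hNv1 (abs_nonneg _) (le_of_lt hX₂)
          nlinarith
        obtain ⟨c, hc⟩ := hqe
        have hediv : e / q = c := by rw [hc, Int.mul_ediv_cancel_left _ hq]
        have hcne : c ≠ 0 := by rintro rfl; rw [mul_zero] at hc; exact hene hc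
        have hcabs : |(c:ℝ)| ≤ 2*N*X₁*X₂/|(q:ℝ)| := by
          rw [le_div_iff₀ hqpos]
          calc |(c:ℝ)| * |(q:ℝ)| = |(e:ℝ)| := by rw [← abs_mul, hc]; push_cast; rw [mul_comm]
            _ ≤ 2*N*X₁*X₂ := hce
        have hcJ : c ≤ J := Int.le_floor.mpr (le_trans (le_abs_self _) hcabs)
        have hcJ' : -J ≤ c := by
          have : (-c : ℤ) ≤ J := Int.le_floor.mpr (by
            push_cast; exact le_trans (neg_le_abs _) hcabs)
          omega
        beta_reduce
        rw [hediv, Finset.mem_coe, Finset.mem_erase, Finset.mem_Icc]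
        exact ⟨hcne, hcJ', hcJ⟩
      · intro e he e' he' hee
        rw [Finset.mem_coe, Finset.mem_erase] at he he'
        obtain ⟨_, heD⟩ := he
        obtain ⟨_, heD'⟩ := he'
        obtain ⟨u, huT, hue⟩ := Finset.mem_image.mp heD
        obtain ⟨u', huT', hue'⟩ := Finset.mem_image.mp heD'
        have h1 : q ∣ e := hue ▸ hcross u huT
        have h2 : q ∣ e' := hue' ▸ hcross u' huT'
        simp only at hee
        calc e = q * (e / q) := (Int.mul_ediv_cancel' h1).symm
          _ = q * (e' / q) := by rw [hee]
          _ = e' := Int.mul_ediv_cancel' h2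
    have h2 : (((Finset.Icc (-J) J).erase 0).card : ℤ) = 2*J := by
      rw [Finset.card_erase_of_mem (Finset.mem_Icc.mpr ⟨by omega, hJ0⟩)]
      rw [Int.card_Icc]
      omega
    have := h1
    have hcast : ((D.erase 0).card : ℤ) ≤ 2*J := by
      calc ((D.erase 0).card : ℤ) ≤ (((Finset.Icc (-J) J).erase 0).card : ℤ) := by exact_mod_cast h1
        _ = 2*J := h2
    exact_mod_cast hcast
  -- assemble
  have hstep : T.card ≤ 2 + (D.erase 0).card * (2*K+1).toNat := by
    rw [hsum]
    have hsubset : D ⊆ insert 0 (D.erase 0) := by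
      intro e he
      rcases eq_or_ne e 0 with rfl | hne
      · exact Finset.mem_insert_self _ _
      · exact Finset.mem_insert_of_mem (Finset.mem_erase.mpr ⟨hne, he⟩)
    have h1 : ∑ e ∈ D, (T.filter fun u => d u = e).card ≤
        ∑ e ∈ insert 0 (D.erase 0), (T.filter fun u => d u = e).card :=
      Finset.sum_le_sum_of_subset hsubset
    rw [Finset.sum_insert (Finset.notMem_erase 0 D)] at h1
    have h2 : ∑ e ∈ D.erase 0, (T.filter fun u => d u = e).card ≤
        (D.erase 0).card * (2*K+1).toNat := by
      have hb := Finset.sum_le_card_nsmul (D.erase 0)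
        (fun e => (T.filter fun u => d u = e).card) ((2*K+1).toNat)
        (fun e he => hfib e (Finset.mem_of_mem_erase he))
      simpa [smul_eq_mul] using hb
    have h3 := hf0
    omega
  have hsum2 : (T.card : ℝ) ≤ 2 + ((D.erase 0).card : ℝ) * (2*(K:ℝ)+1) := by
    have h2K : ((2*K+1).toNat : ℤ) = 2*K+1 := Int.toNat_of_nonneg (by omega)
    have hz : (T.card : ℤ) ≤ 2 + ((D.erase 0).card : ℤ) * ((2*K+1).toNat : ℤ) := by
      exact_mod_cast hstep
    rw [h2K] at hz
    exact_mod_cast hz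
  set P : ℝ := X₁*X₂/|(q:ℝ)| with hP
  have hP0 : 0 < P := by positivity
  have hJP : (J:ℝ) ≤ 2*N*P := by
    rw [hP]
    calc (J:ℝ) ≤ 2*N*X₁*X₂/|(q:ℝ)| := hJle
      _ = 2*N*(X₁*X₂/|(q:ℝ)|) := by ring
  have hKN : (K:ℝ)*N ≤ 2 := by
    rw [← le_div_iff₀ hN0]; exact hKle
  have hJ0' : (0:ℝ) ≤ (J:ℝ) := by exact_mod_cast hJ0
  have hK0' : (0:ℝ) ≤ (K:ℝ) := by exact_mod_cast hK0
  have hDc0 : (0:ℝ) ≤ ((D.erase 0).card : ℝ) := Nat.cast_nonneg _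
  calc (T.card : ℝ) ≤ 2 + ((D.erase 0).card : ℝ) * (2*(K:ℝ)+1) := hsum2
    _ ≤ 2 + (2*(J:ℝ)) * (2*(K:ℝ)+1) := by
        apply add_le_add le_rfl
        apply mul_le_mul_of_nonneg_right hDcard
        linarith [hK0']
    _ ≤ 20 * (P + 1) := by
        nlinarith [mul_le_mul_of_nonneg_right hJP hK0', mul_le_mul_of_nonneg_left hKN (le_of_lt hP0),
          mul_pos hN0 hP0, mul_le_mul_of_nonneg_left hN1 (le_of_lt hP0)]
end

section
/- Let q₂, q₃, q₄ be the (distinct) roots of x³ + Ax + B and {k, i, j} = {2, 3, 4}. Then the Möbius transformation of ℙ¹ given by the matrix γ = ((q_k, 2q_k² + A), (1, -q_k)) swaps (1:0) with (q_k:1) and swaps (q_i:1) with (q_j:1); in particular it permutes the four points {(1:0), (q₂:1), (q₃:1), (q₄:1)} as the double transposition (1 k)(i j). -/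
open scoped LinearAlgebra.Projectivization

/-- The point `(a : 1)` of `ℙ¹`. -/
noncomputable def ptA {F : Type*} [Field F] (a : F) : ℙ F (Fin 2 → F) :=
  Projectivization.mk F ![a, 1] (by intro h; simpa using congrFun h 1)

/-- The point `(1 : 0)` of `ℙ¹`. -/
noncomputable def ptInf (F : Type*) [Field F] : ℙ F (Fin 2 → F) :=
  Projectivization.mk F ![1, 0] (by intro h; simpa using congrFun h 0)

/-- For distinct roots `q_k, q_i, q_j` of `x³ + Ax + B`, the Möbius transformation of `ℙ¹`
induced by the matrix `((q_k, 2q_k² + A), (1, -q_k))` swaps `(1:0)` with `(q_k:1)` and swaps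
`(q_i:1)` with `(q_j:1)`; i.e. it acts on the four marked points as the double transposition
`(1 k)(i j)`. -/
theorem mobius_double_transposition {F : Type*} [Field F] (A B qk qi qj : F)
    (hsum : qk + qi + qj = 0) (he2 : qk * qi + qk * qj + qi * qj = A)
    (he3 : qk * qi * qj = -B)
    (hki : qk ≠ qi) (hkj : qk ≠ qj) (hij : qi ≠ qj) :
    ∃ hf : Function.Injective (Matrix.toLin' !![qk, 2 * qk ^ 2 + A; (1 : F), -qk]),
      Projectivization.map (Matrix.toLin' !![qk, 2 * qk ^ 2 + A; (1 : F), -qk]) hf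
          (ptInf F) = ptA qk ∧
      Projectivization.map (Matrix.toLin' !![qk, 2 * qk ^ 2 + A; (1 : F), -qk]) hf
          (ptA qk) = ptInf F ∧
      Projectivization.map (Matrix.toLin' !![qk, 2 * qk ^ 2 + A; (1 : F), -qk]) hf
          (ptA qi) = ptA qj ∧
      Projectivization.map (Matrix.toLin' !![qk, 2 * qk ^ 2 + A; (1 : F), -qk]) hf
          (ptA qj) = ptA qi := by
  set M : Matrix (Fin 2) (Fin 2) F := !![qk, 2 * qk ^ 2 + A; (1 : F), -qk] with hM
  have hdet : M.det = -((qk - qi) * (qk - qj)) := by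
    simp [hM, Matrix.det_fin_two_of]
    linear_combination he2 - 2 * qk * hsum
  have hdet0 : M.det ≠ 0 := by
    rw [hdet]
    intro h
    rcases mul_eq_zero.1 (neg_eq_zero.1 h) with h | h
    · exact hki (sub_eq_zero.1 h)
    · exact hkj (sub_eq_zero.1 h)
  have hinv : Invertible M := M.invertibleOfIsUnitDet (isUnit_iff_ne_zero.2 hdet0)
  have hf : Function.Injective (Matrix.toLin' M) := by
    have := (M.toLinearEquiv' hinv).injective
    exact this
  refine ⟨hf, ?_, ?_, ?_, ?_⟩
  all_goals
    simp only [ptA, ptInf, Projectivization.map_mk]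
    rw [Projectivization.mk_eq_mk_iff']
  · refine ⟨1, funext fun x => ?_⟩
    fin_cases x <;>
      simp [hM, Matrix.toLin'_apply, Matrix.mulVec, dotProduct, Fin.sum_univ_two]
  · refine ⟨3 * qk ^ 2 + A, funext fun x => ?_⟩
    fin_cases x <;>
      simp [hM, Matrix.toLin'_apply, Matrix.mulVec, dotProduct, Fin.sum_univ_two] <;>
      ring
  · refine ⟨qi - qk, funext fun x => ?_⟩
    fin_cases x
    · simp [hM, Matrix.toLin'_apply, Matrix.mulVec, dotProduct, Fin.sum_univ_two]
      linear_combination he2 - 2 * qk * hsum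
    · simp [hM, Matrix.toLin'_apply, Matrix.mulVec, dotProduct, Fin.sum_univ_two]
      ring
  · refine ⟨qj - qk, funext fun x => ?_⟩
    fin_cases x
    · simp [hM, Matrix.toLin'_apply, Matrix.mulVec, dotProduct, Fin.sum_univ_two]
      linear_combination he2 - 2 * qk * hsum
    · simp [hM, Matrix.toLin'_apply, Matrix.mulVec, dotProduct, Fin.sum_univ_two]
      ring
end
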